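/- arXiv:2201.11524 — 6 statements merged into one kernel-verified Lean document; each statement's English description precedes it below -/
import Mathlib

section
/- Let (X_f)_{f∈F} be an independent family of ℕ-valued random variables indexed by a finite set F on a probability space (Ω,P), let A be a finite set, and let ν : A × F → ℕ. Assume that for every f ∈ F and every exponent m with m ≤ 2·max_{a∈A} ν(a,f), the real-valued random variable X_f^m is integrable. Let N := ∑_{a∈A} ∏_{f∈F} X_f^{ν(a,f)}. Then N is square-integrable and Var(N) = ∑_{a∈A} ( ∏_{f∈F} E[X_f^{2ν(a,f)}] − ∏_{f∈F} (E[X_f^{ν(a,f)}])² ) + ∑_{a₁≠a₂, a₁,a₂∈A} ( ∏_{f∈F} E[X_f^{ν(a₁,f)+ν(a₂,f)}] − ∏_{f∈F} E[X_f^{ν(a₁,f)}] · ∏_{f∈F} E[X_f^{ν(a₂,f)}] ), where E[·] denotes the (real-valued) Bochner integral and Var(N) = E[N²] − (E[N])². -/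
open MeasureTheory ProbabilityTheory Finset

lemma integral_prod_of_indep' {Ω : Type*} [MeasurableSpace Ω] (P : Measure Ω)
    [IsProbabilityMeasure P] {F : Type*} (Y : F → Ω → ℝ)
    (hmeas : ∀ f, Measurable (Y f))
    (hind : iIndepFun Y P)
    (hint : ∀ f, Integrable (Y f) P) (s : Finset F) :
    Integrable (fun ω => ∏ f ∈ s, Y f ω) P ∧
      ∫ ω, ∏ f ∈ s, Y f ω ∂P = ∏ f ∈ s, ∫ ω, Y f ω ∂P := by
  classical
  induction s using Finset.induction_on with
  | empty => simp
  | @insert i s hi ih =>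
    have hsi : IndepFun (∏ j ∈ s, Y j) (Y i) P :=
      hind.indepFun_finsetProd_of_notMem hmeas hi
    have hprodeq : (∏ j ∈ s, Y j) = fun ω => ∏ j ∈ s, Y j ω := by
      funext ω; simp
    rw [hprodeq] at hsi
    have hintp : Integrable (fun ω => (∏ j ∈ s, Y j ω) * Y i ω) P :=
      hsi.integrable_mul ih.1 (hint i)
    have heq : (fun ω => ∏ f ∈ insert i s, Y f ω)
        = fun ω => (∏ j ∈ s, Y j ω) * Y i ω := by
      funext ω; rw [Finset.prod_insert hi, mul_comm]
    constructor
    · rw [heq]; exact hintp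
    · have h2 := hsi.integral_mul_eq_mul_integral ih.1.aestronglyMeasurable (hint i).aestronglyMeasurable
      rw [show ((fun ω => ∏ j ∈ s, Y j ω) * Y i) = fun ω => (∏ j ∈ s, Y j ω) * Y i ω from rfl] at h2
      rw [heq, h2, ih.2, Finset.prod_insert hi, mul_comm]

/-- Lemma A.3: variance of the answer count `N = ∑_{a∈A} ∏_{f∈F} X_f^{ν(a,f)}`
of a Boolean conjunctive query over a tuple-independent bag PDB, assuming all
needed moments (up to order `2·max_a ν(a,f)` for each fact `f`) are finite. -/
theorem variance_sum_prod_pow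
    {Ω : Type*} [MeasurableSpace Ω] (P : Measure Ω) [IsProbabilityMeasure P]
    {F : Type*} [Fintype F] {A : Type*} [Fintype A] [DecidableEq A]
    (X : F → Ω → ℕ) (hX : ∀ f, Measurable (X f))
    (hind : iIndepFun X P)
    (ν : A × F → ℕ)
    (hmom : ∀ f : F, ∀ m : ℕ, m ≤ 2 * (Finset.univ.sup fun a : A => ν (a, f)) →
      Integrable (fun ω => ((X f ω : ℝ)) ^ m) P)
    (N : Ω → ℝ) (hN : N = fun ω => ∑ a : A, ∏ f : F, ((X f ω : ℝ)) ^ ν (a, f)) :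
    MemLp N 2 P ∧
    (∫ ω, N ω ^ 2 ∂P) - (∫ ω, N ω ∂P) ^ 2
      = (∑ a : A,
            ((∏ f : F, ∫ ω, ((X f ω : ℝ)) ^ (2 * ν (a, f)) ∂P)
              - ∏ f : F, (∫ ω, ((X f ω : ℝ)) ^ ν (a, f) ∂P) ^ 2))
        + ∑ p ∈ Finset.univ.filter (fun p : A × A => p.1 ≠ p.2),
            ((∏ f : F, ∫ ω, ((X f ω : ℝ)) ^ (ν (p.1, f) + ν (p.2, f)) ∂P)
              - (∏ f : F, ∫ ω, ((X f ω : ℝ)) ^ ν (p.1, f) ∂P)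
                * (∏ f : F, ∫ ω, ((X f ω : ℝ)) ^ ν (p.2, f) ∂P)) := by
  classical
  -- measurability of powers
  have hmeaspow : ∀ (f : F) (m : ℕ), Measurable (fun ω => ((X f ω : ℝ)) ^ m) :=
    fun f m => (measurable_from_top (f := fun n : ℕ => ((n : ℝ)) ^ m)).comp (hX f)
  -- key: product over F of powers
  have key : ∀ k : F → ℕ, (∀ f, k f ≤ 2 * (Finset.univ.sup fun a : A => ν (a, f))) →
      Integrable (fun ω => ∏ f : F, ((X f ω : ℝ)) ^ k f) P ∧
      ∫ ω, ∏ f : F, ((X f ω : ℝ)) ^ k f ∂P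
        = ∏ f : F, ∫ ω, ((X f ω : ℝ)) ^ k f ∂P := by
    intro k hk
    have hindk : iIndepFun
        (fun f ω => ((X f ω : ℝ)) ^ k f) P :=
      hind.comp (fun f (n : ℕ) => ((n : ℝ)) ^ k f) (fun f => measurable_from_top)
    exact integral_prod_of_indep' P _ (fun f => hmeaspow f (k f)) hindk
      (fun f => hmom f (k f) (hk f)) Finset.univ
  have hle1 : ∀ (a : A) (f : F), ν (a, f) ≤ 2 * (Finset.univ.sup fun a : A => ν (a, f)) :=
    fun a f => (Finset.le_sup (f := fun a : A => ν (a, f)) (Finset.mem_univ a)).trans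
      (Nat.le_mul_of_pos_left _ two_pos)
  have hle2 : ∀ (a b : A) (f : F),
      ν (a, f) + ν (b, f) ≤ 2 * (Finset.univ.sup fun a : A => ν (a, f)) := by
    intro a b f
    rw [two_mul]
    exact Nat.add_le_add (Finset.le_sup (f := fun a : A => ν (a, f)) (Finset.mem_univ a))
      (Finset.le_sup (f := fun a : A => ν (a, f)) (Finset.mem_univ b))
  -- abbreviations
  set m : A → ℝ := fun a => ∏ f : F, ∫ ω, ((X f ω : ℝ)) ^ ν (a, f) ∂P with hm
  set M : A × A → ℝ := fun p => ∏ f : F, ∫ ω, ((X f ω : ℝ)) ^ (ν (p.1, f) + ν (p.2, f)) ∂P with hM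
  -- N squared expansion
  have hNsq : (fun ω => N ω ^ 2)
      = fun ω => ∑ p : A × A, ∏ f : F, ((X f ω : ℝ)) ^ (ν (p.1, f) + ν (p.2, f)) := by
    funext ω
    rw [hN]
    rw [sq, Finset.sum_mul_sum, ← Finset.sum_product']
    rw [show (Finset.univ ×ˢ Finset.univ : Finset (A × A)) = Finset.univ from rfl]
    refine Finset.sum_congr rfl fun p _ => ?_
    rw [← Finset.prod_mul_distrib]
    exact Finset.prod_congr rfl fun f _ => (pow_add _ _ _).symm
  -- integrals
  have hY : ∀ a : A, Integrable (fun ω => ∏ f : F, ((X f ω : ℝ)) ^ ν (a, f)) P ∧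
      ∫ ω, ∏ f : F, ((X f ω : ℝ)) ^ ν (a, f) ∂P = m a :=
    fun a => key (fun f => ν (a, f)) (hle1 a)
  have hYY : ∀ p : A × A,
      Integrable (fun ω => ∏ f : F, ((X f ω : ℝ)) ^ (ν (p.1, f) + ν (p.2, f))) P ∧
      ∫ ω, ∏ f : F, ((X f ω : ℝ)) ^ (ν (p.1, f) + ν (p.2, f)) ∂P = M p :=
    fun p => key (fun f => ν (p.1, f) + ν (p.2, f)) (hle2 p.1 p.2)
  have hNmeas : Measurable N := by
    rw [hN]
    exact Finset.measurable_sum _ fun a _ =>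
      Finset.measurable_prod _ fun f _ => hmeaspow f (ν (a, f))
  have hintsq : Integrable (fun ω => N ω ^ 2) P := by
    rw [hNsq]
    exact integrable_finset_sum _ fun p _ => (hYY p).1
  have hmem : MemLp N 2 P :=
    (memLp_two_iff_integrable_sq hNmeas.aestronglyMeasurable).mpr hintsq
  have hEN : ∫ ω, N ω ∂P = ∑ a : A, m a := by
    rw [hN]
    rw [integral_finset_sum _ fun a _ => (hY a).1]
    exact Finset.sum_congr rfl fun a _ => (hY a).2
  have hEN2 : ∫ ω, N ω ^ 2 ∂P = ∑ p : A × A, M p := by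
    rw [show (∫ ω, N ω ^ 2 ∂P) = ∫ ω, ∑ p : A × A,
        ∏ f : F, ((X f ω : ℝ)) ^ (ν (p.1, f) + ν (p.2, f)) ∂P from by rw [← hNsq]]
    rw [integral_finset_sum _ fun p _ => (hYY p).1]
    exact Finset.sum_congr rfl fun p _ => (hYY p).2
  refine ⟨hmem, ?_⟩
  rw [hEN, hEN2]
  have hsqsum : (∑ a : A, m a) ^ 2 = ∑ p : A × A, m p.1 * m p.2 := by
    rw [sq, Finset.sum_mul_sum, ← Finset.sum_product']; rfl
  rw [hsqsum, ← Finset.sum_sub_distrib]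
  -- split over diagonal
  rw [← Finset.sum_filter_add_sum_filter_not Finset.univ (fun p : A × A => p.1 = p.2)]
  congr 1
  · -- diagonal
    rw [show (Finset.univ.filter fun p : A × A => p.1 = p.2)
        = Finset.univ.image (fun a : A => (a, a)) from ?_]
    · rw [Finset.sum_image (by intro a _ b _ h; exact (Prod.mk.injEq _ _ _ _ ▸ h).1)]
      refine Finset.sum_congr rfl fun a _ => ?_
      simp only [hM, hm]
      congr 1
      · exact Finset.prod_congr rfl fun f _ => by rw [two_mul]
      · rw [Finset.prod_pow, pow_two]
    · ext p
      simp only [Finset.mem_filter, Finset.mem_image, Finset.mem_univ, true_and]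
      constructor
      · intro h; exact ⟨p.1, Prod.ext rfl h⟩
      · rintro ⟨a, rfl⟩; rfl
end

section
/- Let X₁, X₂, X₃, … be i.i.d. ℕ-valued random variables on a probability space (Ω,P), let k ∈ ℕ, and let p₀ := P(X₁ = 0). Then there exist real numbers y₁, …, y_k ≥ 0 such that for all n ∈ ℕ: P( ∑_{i=1}^{n} X_i ≤ k ) = p₀^n + ∑_{j=1}^{k} C(n,j) · p₀^{n−j} · y_j, where C(n,j) is the binomial coefficient (equal to 0 for j > n). -/
open MeasureTheory ProbabilityTheory Finset

open scoped ENNReal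

noncomputable def Zfun (p : ℕ → ℝ≥0∞) : ℕ → ℕ → ℝ≥0∞
  | 0, _ => 1
  | (j+1), m => ∑ r ∈ Finset.Icc 1 m, p r * Zfun p j (m - r)

lemma Zfun_ne_top (p : ℕ → ℝ≥0∞) (hp : ∀ r, p r ≠ ⊤) : ∀ j m, Zfun p j m ≠ ⊤ := by
  intro j
  induction j with
  | zero => intro m; simp [Zfun]
  | succ j ih =>
    intro m
    rw [Zfun]
    exact (ENNReal.sum_lt_top.mpr (fun r _ => ENNReal.mul_lt_top (hp r).lt_top (ih _).lt_top)).ne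

lemma Zfun_eq_zero (p : ℕ → ℝ≥0∞) : ∀ j m, m < j → Zfun p j m = 0 := by
  intro j
  induction j with
  | zero => intro m h; omega
  | succ j ih =>
    intro m h
    rw [Zfun]
    refine Finset.sum_eq_zero fun r hr => ?_
    simp only [Finset.mem_Icc] at hr
    rw [ih (m - r) (by omega), mul_zero]

noncomputable def Gfun (p : ℕ → ℝ≥0∞) (n m : ℕ) : ℝ≥0∞ :=
  ∑ j ∈ Finset.range (m+1), (n.choose j : ℝ≥0∞) * (p 0)^(n-j) * Zfun p j m

lemma Gfun_succ (p : ℕ → ℝ≥0∞) (n m : ℕ) :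
    Gfun p (n+1) m = ∑ r ∈ Finset.range (m+1), p r * Gfun p n (m - r) := by
  have key : ∀ a : ℕ, (n.choose a : ℝ≥0∞) * (p 0 * (p 0)^(n-a)) = (n.choose a : ℝ≥0∞) * (p 0)^(n+1-a) := by
    intro a
    rcases le_or_gt a n with h | h
    · rw [← pow_succ']
      congr 2
      omega
    · rw [Nat.choose_eq_zero_of_lt h]
      simp
  have hIcc : ∀ f : ℕ → ℝ≥0∞, ∑ r ∈ Finset.range m, f (r+1) = ∑ r ∈ Finset.Icc 1 m, f r := by
    intro f
    rw [show Finset.Icc 1 m = Finset.Ico 1 (m+1) by rfl, Finset.sum_Ico_eq_sum_range]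
    simp [add_comm]
  have h1 : ∀ r ∈ Finset.Icc 1 m,
      (∑ x ∈ Finset.range m, (n.choose x : ℝ≥0∞) * p 0 ^ (n-x) * Zfun p x (m-r)) = Gfun p n (m-r) := by
    intro r hr
    simp only [Finset.mem_Icc] at hr
    rw [Gfun]
    refine (Finset.sum_subset ?_ ?_).symm
    · intro x hx
      simp only [Finset.mem_range] at *
      omega
    · intro x _ hx2
      simp only [Finset.mem_range, not_lt] at hx2
      rw [Zfun_eq_zero p x (m-r) (by omega), mul_zero]
  have e2 : p 0 * Gfun p n m
      = (∑ x ∈ Finset.range m, (n.choose (x+1) : ℝ≥0∞) * p 0 ^ (n - x) * Zfun p (x+1) m)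
        + p 0 ^ (n+1) := by
    rw [Gfun, Finset.mul_sum, Finset.sum_range_succ']
    congr 1
    · refine Finset.sum_congr rfl fun x _ => ?_
      calc p 0 * ((n.choose (x+1) : ℝ≥0∞) * p 0 ^ (n - (x+1)) * Zfun p (x+1) m)
          = ((n.choose (x+1) : ℝ≥0∞) * (p 0 * p 0 ^ (n - (x+1)))) * Zfun p (x+1) m := by ring
        _ = ((n.choose (x+1) : ℝ≥0∞) * p 0 ^ (n+1-(x+1))) * Zfun p (x+1) m := by rw [key]
        _ = (n.choose (x+1) : ℝ≥0∞) * p 0 ^ (n - x) * Zfun p (x+1) m := by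
              rw [Nat.succ_sub_succ]
    · show p 0 * ((n.choose 0 : ℝ≥0∞) * p 0 ^ (n - 0) * Zfun p 0 m) = p 0 ^ (n+1)
      simp only [Nat.choose_zero_right, Nat.cast_one, one_mul, Nat.sub_zero, Zfun]
      rw [mul_one, ← pow_succ']
  have e3 : (∑ r ∈ Finset.range (m+1), p r * Gfun p n (m-r))
      = p 0 * Gfun p n m
        + ∑ x ∈ Finset.range m, (n.choose x : ℝ≥0∞) * p 0 ^ (n - x) * Zfun p (x+1) m := by
    rw [Finset.sum_range_succ', Nat.sub_zero, add_comm]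
    congr 1
    · have : ∀ x : ℕ, (n.choose x : ℝ≥0∞) * p 0 ^ (n - x) * Zfun p (x+1) m
          = ∑ r ∈ Finset.Icc 1 m, p r * ((n.choose x : ℝ≥0∞) * p 0 ^ (n - x) * Zfun p x (m-r)) := by
        intro x
        rw [show Zfun p (x+1) m = ∑ r ∈ Finset.Icc 1 m, p r * Zfun p x (m - r) from rfl,
          Finset.mul_sum]
        refine Finset.sum_congr rfl fun r _ => ?_
        ring
      rw [hIcc fun r => p r * Gfun p n (m - r)]
      symm
      calc ∑ x ∈ Finset.range m, (n.choose x : ℝ≥0∞) * p 0 ^ (n - x) * Zfun p (x+1) m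
          = ∑ x ∈ Finset.range m, ∑ r ∈ Finset.Icc 1 m,
              p r * ((n.choose x : ℝ≥0∞) * p 0 ^ (n - x) * Zfun p x (m-r)) := by
            exact Finset.sum_congr rfl fun x _ => this x
        _ = ∑ r ∈ Finset.Icc 1 m, ∑ x ∈ Finset.range m,
              p r * ((n.choose x : ℝ≥0∞) * p 0 ^ (n - x) * Zfun p x (m-r)) := Finset.sum_comm
        _ = ∑ r ∈ Finset.Icc 1 m, p r * Gfun p n (m - r) := by
            refine Finset.sum_congr rfl fun r hr => ?_
            rw [← Finset.mul_sum, h1 r hr]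
  rw [e3, e2, Gfun, Finset.sum_range_succ']
  simp only [Nat.choose_succ_succ, Nat.cast_add, add_mul, Nat.succ_sub_succ,
    Finset.sum_add_distrib, Nat.choose_zero_right, Nat.cast_one, one_mul, Nat.sub_zero]
  show _ + _ + p 0 ^ (n+1) * Zfun p 0 m = _
  rw [show Zfun p 0 m = 1 from rfl, mul_one]
  ring

/-- Lemma B.2 (sum_of_indep_copies): for i.i.d. ℕ-valued random variables
`X₀, X₁, …` with `p₀ = P(X₀ = 0)`, there exist nonnegative `y₁, …, y_k` such that
`P(∑_{i<n} X_i ≤ k) = p₀^n + ∑_{j=1}^k C(n,j) p₀^{n-j} y_j` for all `n`. -/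
theorem cdf_sum_of_indep_copies
    {Ω : Type*} [MeasurableSpace Ω] (P : Measure Ω) [IsProbabilityMeasure P]
    (X : ℕ → Ω → ℕ) (hX : ∀ i, Measurable (X i))
    (hind : iIndepFun X P)
    (hid : ∀ i j, IdentDistrib (X i) (X j) P P)
    (k : ℕ) :
    ∃ y : ℕ → ℝ, (∀ j, 1 ≤ j → j ≤ k → 0 ≤ y j) ∧
      ∀ n : ℕ,
        (P {ω | ∑ i ∈ Finset.range n, X i ω ≤ k}).toReal
          = (P {ω | X 0 ω = 0}).toReal ^ n
            + ∑ j ∈ Finset.Icc 1 k,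
                (n.choose j : ℝ) * (P {ω | X 0 ω = 0}).toReal ^ (n - j) * y j := by
  set p : ℕ → ℝ≥0∞ := fun r => P (X 0 ⁻¹' {r}) with hp
  have hpne : ∀ r, p r ≠ ⊤ := fun r => measure_ne_top P _
  have hZne : ∀ j m, Zfun p j m ≠ ⊤ := Zfun_ne_top p hpne
  -- the sum random variable is measurable
  have hS : ∀ n : ℕ, Measurable (fun ω => ∑ i ∈ Finset.range n, X i ω) := by
    intro n
    exact Finset.measurable_sum _ fun i _ => hX i
  -- recurrence
  have hrec : ∀ n m : ℕ, P {ω | ∑ i ∈ Finset.range (n+1), X i ω ≤ m}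
      = ∑ r ∈ Finset.range (m+1), p r * P {ω | ∑ i ∈ Finset.range n, X i ω ≤ m - r} := by
    intro n m
    have hset : {ω | ∑ i ∈ Finset.range (n+1), X i ω ≤ m}
        = ⋃ r ∈ Finset.range (m+1),
            ((X n ⁻¹' {r}) ∩ {ω | ∑ i ∈ Finset.range n, X i ω ≤ m - r}) := by
      ext ω
      simp only [Set.mem_setOf_eq, Finset.sum_range_succ, Set.mem_iUnion, Set.mem_inter_iff,
        Set.mem_preimage, Set.mem_singleton_iff, Finset.mem_range, Finset.mem_coe,
        exists_prop]
      constructor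
      · intro h
        exact ⟨X n ω, by omega, rfl, by omega⟩
      · rintro ⟨r, hr, hXr, h⟩
        omega
    have hdisj : (↑(Finset.range (m+1)) : Set ℕ).PairwiseDisjoint
        (fun r => (X n ⁻¹' {r}) ∩ {ω | ∑ i ∈ Finset.range n, X i ω ≤ m - r}) := by
      intro r _ s _ hrs
      refine Set.disjoint_left.mpr ?_
      rintro ω ⟨h1, _⟩ ⟨h2, _⟩
      exact hrs ((Set.mem_singleton_iff.mp h1).symm.trans (Set.mem_singleton_iff.mp h2))
    have hmeas : ∀ r ∈ Finset.range (m+1), MeasurableSet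
        ((X n ⁻¹' {r}) ∩ {ω | ∑ i ∈ Finset.range n, X i ω ≤ m - r}) := by
      intro r _
      exact ((hX n) (measurableSet_singleton r)).inter (measurableSet_le (hS n) measurable_const)
    rw [hset, measure_biUnion_finset hdisj hmeas]
    refine Finset.sum_congr rfl fun r _ => ?_
    have hindep : IndepFun (X n) (fun ω => ∑ i ∈ Finset.range n, X i ω) P := by
      have h := (hind.indepFun_sum_range_succ hX n).symm
      have : (∑ j ∈ Finset.range n, X j) = fun ω => ∑ i ∈ Finset.range n, X i ω := by
        ext ω
        simp
      rwa [this] at h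
    have := hindep.measure_inter_preimage_eq_mul (μ := P) {r} (Set.Iic (m - r))
      (measurableSet_singleton r) (by trivial)
    have hpre : (fun ω => ∑ i ∈ Finset.range n, X i ω) ⁻¹' (Set.Iic (m - r))
        = {ω | ∑ i ∈ Finset.range n, X i ω ≤ m - r} := rfl
    rw [hpre] at this
    rw [this]
    congr 1
    exact (hid n 0).measure_mem_eq (measurableSet_singleton r)
  -- master identity
  have master : ∀ n m : ℕ, P {ω | ∑ i ∈ Finset.range n, X i ω ≤ m} = Gfun p n m := by
    intro n
    induction n with
    | zero =>
      intro m
      have h1 : {ω : Ω | ∑ i ∈ Finset.range 0, X i ω ≤ m} = Set.univ := by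
        ext ω; simp
      rw [h1, measure_univ, Gfun, Finset.sum_range_succ']
      simp [Zfun]
    | succ n ih =>
      intro m
      rw [hrec n m, Gfun_succ]
      exact Finset.sum_congr rfl fun r _ => by rw [ih]
  refine ⟨fun j => (Zfun p j k).toReal, fun j _ _ => ENNReal.toReal_nonneg, fun n => ?_⟩
  rw [master n k]
  have hp0 : P {ω | X 0 ω = 0} = p 0 := rfl
  rw [hp0]
  have hIcc : ∀ f : ℕ → ℝ≥0∞, ∑ r ∈ Finset.range k, f (r+1) = ∑ r ∈ Finset.Icc 1 k, f r := by
    intro f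
    rw [show Finset.Icc 1 k = Finset.Ico 1 (k+1) by rfl, Finset.sum_Ico_eq_sum_range]
    simp [add_comm]
  rw [Gfun, Finset.sum_range_succ', hIcc fun j => (n.choose j : ℝ≥0∞) * p 0 ^ (n - j) * Zfun p j k]
  rw [ENNReal.toReal_add]
  · rw [ENNReal.toReal_sum, add_comm]
    · congr 1
      · simp [Zfun, ENNReal.toReal_pow]
      · refine Finset.sum_congr rfl fun j _ => ?_
        rw [ENNReal.toReal_mul, ENNReal.toReal_mul, ENNReal.toReal_pow]
        simp
    · intro j _
      exact ENNReal.mul_ne_top (ENNReal.mul_ne_top (ENNReal.natCast_ne_top _)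
        (ENNReal.pow_ne_top (hpne 0))) (hZne j k)
  · exact (ENNReal.sum_lt_top.mpr fun j _ => ENNReal.mul_lt_top
      (ENNReal.mul_lt_top (ENNReal.natCast_lt_top _) (ENNReal.pow_ne_top (hpne 0)).lt_top)
      (hZne j k).lt_top).ne
  · exact ENNReal.mul_ne_top (ENNReal.mul_ne_top (ENNReal.natCast_ne_top _)
      (ENNReal.pow_ne_top (hpne 0))) (hZne 0 k)
end

section
/- Let Y, X₁, X₂, X₃, … be ℕ-valued random variables on a probability space (Ω,P) such that the whole family (Y, X₁, X₂, …) is mutually independent and X₁, X₂, … are identically distributed. Let k ∈ ℕ, p₀ := P(X₁ = 0), and q₀ := P(Y = 0). Then there exist real numbers z₁, …, z_k ≥ 0 such that for all n ∈ ℕ: P( Y · ∑_{i=1}^{n} X_i ≤ k ) = q₀ + (1 − q₀) · p₀^n + ∑_{j=1}^{k} C(n,j) · p₀^{n−j} · z_j, where C(n,j) is the binomial coefficient (equal to 0 for j > n). -/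
open MeasureTheory ProbabilityTheory Finset
open scoped ENNReal

set_option linter.unusedSectionVars false
set_option maxHeartbeats 1000000

namespace CdfAux

variable {Ω : Type*} [MeasurableSpace Ω] {P : Measure Ω} {Z : ℕ → Ω → ℕ}

/-- The event that all shifted coordinates in `s` are `≥ c` and their sum is `≤ m`. -/
def G (Z : ℕ → Ω → ℕ) (c : ℕ) (s : Finset ℕ) (m : ℕ) : Set Ω :=
  {ω | (∀ i ∈ s, c ≤ Z (i + 1) ω) ∧ ∑ i ∈ s, Z (i + 1) ω ≤ m}

lemma measurable_G (hZ : ∀ i, Measurable (Z i)) (c : ℕ) (s : Finset ℕ) (m : ℕ) :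
    MeasurableSet (G Z c s m) := by
  have h1 : MeasurableSet {ω : Ω | ∀ i ∈ s, c ≤ Z (i + 1) ω} := by
    have : {ω : Ω | ∀ i ∈ s, c ≤ Z (i + 1) ω} = ⋂ i ∈ s, (Z (i + 1)) ⁻¹' Set.Ici c := by
      ext ω; simp
    rw [this]
    exact MeasurableSet.biInter (s.countable_toSet) fun i _ => hZ (i + 1) measurableSet_Ici
  have h2 : MeasurableSet {ω : Ω | ∑ i ∈ s, Z (i + 1) ω ≤ m} := by
    have hsum : Measurable fun ω => ∑ i ∈ s, Z (i + 1) ω :=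
      Finset.measurable_sum s fun i _ => hZ (i + 1)
    exact hsum measurableSet_Iic
  exact h1.inter h2

lemma G_empty (c m : ℕ) : G Z c ∅ m = Set.univ := by
  ext ω; simp [G]

lemma G_vanish {s : Finset ℕ} {m : ℕ} (h : m < s.card) : G Z 1 s m = ∅ := by
  ext ω
  simp only [G, Set.mem_setOf_eq, Set.mem_empty_iff_false, iff_false, not_and]
  intro h1 h2
  have : s.card • 1 ≤ ∑ i ∈ s, Z (i + 1) ω := Finset.card_nsmul_le_sum s _ 1 h1
  simp only [smul_eq_mul, mul_one] at this
  omega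

/-- Independence of a single coordinate `Z b` from the joint event `G Z c s m`,
when `b` is not among the shifted indices. -/
lemma indep_single (hZ : ∀ i, Measurable (Z i))
    (hind : iIndepFun Z P)
    {b : ℕ} {s : Finset ℕ} (hb : ∀ i ∈ s, i + 1 ≠ b) (A : Set ℕ) (c m : ℕ) :
    P (Z b ⁻¹' A ∩ G Z c s m) = P (Z b ⁻¹' A) * P (G Z c s m) := by
  classical
  set T : Finset ℕ := s.image (· + 1) with hT
  have hST : Disjoint ({b} : Finset ℕ) T := by
    simp only [Finset.disjoint_left, Finset.mem_singleton, hT, Finset.mem_image]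
    rintro x rfl ⟨i, hi, hix⟩
    exact hb i hi hix
  have h := hind.indepFun_finset {b} T hST hZ
  set A' : Set (({b} : Finset ℕ) → ℕ) :=
    (fun v => v ⟨b, Finset.mem_singleton_self b⟩) ⁻¹' A with hA'
  set B' : Set (↥T → ℕ) :=
    {v | (∀ j : ↥T, c ≤ v j) ∧ ∑ j : ↥T, v j ≤ m} with hB'
  have hFS : (fun ω (i : ({b} : Finset ℕ)) => Z i ω) ⁻¹' A' = Z b ⁻¹' A := rfl
  have hFT : (fun ω (i : ↥T) => Z i ω) ⁻¹' B' = G Z c s m := by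
    ext ω
    simp only [Set.mem_preimage, hB', Set.mem_setOf_eq, G]
    have hsum : ∑ j : ↥T, Z (j : ℕ) ω = ∑ i ∈ s, Z (i + 1) ω := by
      rw [Finset.sum_coe_sort T (fun j => Z j ω), hT,
        Finset.sum_image (by intro x _ y _ h; simp only at h; omega)]
    rw [hsum]
    constructor
    · rintro ⟨h1, h2⟩
      exact ⟨fun i hi => h1 ⟨i + 1, Finset.mem_image_of_mem _ hi⟩, h2⟩
    · rintro ⟨h1, h2⟩
      refine ⟨fun j => ?_, h2⟩
      obtain ⟨j, hj⟩ := j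
      simp only [hT, Finset.mem_image] at hj
      obtain ⟨i, hi, rfl⟩ := hj
      exact h1 i hi
  have key := indepFun_iff_measure_inter_preimage_eq_mul.mp h A' B'
    (A'.to_countable.measurableSet) (B'.to_countable.measurableSet)
  rw [hFS, hFT] at key
  exact key

lemma G_insert_eq (c : ℕ) {a : ℕ} {s : Finset ℕ} (ha : a ∉ s) (m : ℕ) :
    G Z c (insert a s) m
      = ⋃ x ∈ Finset.Icc c m, (Z (a + 1) ⁻¹' {x} ∩ G Z c s (m - x)) := by
  ext ω
  simp only [G, Set.mem_setOf_eq, Set.mem_iUnion, Set.mem_inter_iff, Set.mem_preimage,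
    Set.mem_singleton_iff, Finset.mem_Icc, exists_prop]
  constructor
  · rintro ⟨h1, h2⟩
    rw [Finset.sum_insert ha] at h2
    refine ⟨Z (a + 1) ω, ⟨h1 a (Finset.mem_insert_self a s), by omega⟩, rfl,
      fun i hi => h1 i (Finset.mem_insert_of_mem hi), by omega⟩
  · rintro ⟨x, ⟨hcx, hxm⟩, hZx, h1, h2⟩
    refine ⟨fun i hi => ?_, ?_⟩
    · rcases Finset.mem_insert.1 hi with rfl | hi
      · omega
      · exact h1 i hi
    · rw [Finset.sum_insert ha, hZx]; omega

lemma G_insert (hZ : ∀ i, Measurable (Z i))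
    (hind : iIndepFun Z P)
    (c : ℕ) {a : ℕ} {s : Finset ℕ} (ha : a ∉ s) (m : ℕ) :
    P (G Z c (insert a s) m)
      = ∑ x ∈ Finset.Icc c m, P (Z (a + 1) ⁻¹' {x}) * P (G Z c s (m - x)) := by
  rw [G_insert_eq c ha m, measure_biUnion_finset ?hd fun x _ =>
    (hZ (a + 1) (measurableSet_singleton x)).inter (measurable_G hZ c s (m - x))]
  · refine Finset.sum_congr rfl fun x _ => ?_
    refine indep_single hZ hind ?_ {x} c (m - x)
    intro i hi h
    have hia : i = a := by omega
    exact ha (hia ▸ hi)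
  case hd =>
    intro x _ y _ hxy
    simp only [Function.onFun]
    refine Set.disjoint_left.2 fun ω ⟨hx, _⟩ ⟨hy, _⟩ => hxy ?_
    simp only [Set.mem_preimage, Set.mem_singleton_iff] at hx hy
    omega

section
variable [IsProbabilityMeasure P] (hZ : ∀ i, Measurable (Z i))
  (hind : iIndepFun Z P)
  (hid : ∀ i j : ℕ, IdentDistrib (Z (i + 1)) (Z (j + 1)) P P)

include hid in
/-- marginal of any copy equals that of `Z 1` -/
lemma p_eq (a : ℕ) (A : Set ℕ) : P (Z (a + 1) ⁻¹' A) = P (Z 1 ⁻¹' A) :=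
  (hid a 0).measure_mem_eq (by exact Set.to_countable A |>.measurableSet)

include hZ hind hid

lemma w_rec (j m : ℕ) :
    P (G Z 1 (Finset.range (j + 1)) m)
      = ∑ x ∈ Finset.Icc 1 m, P (Z 1 ⁻¹' {x}) * P (G Z 1 (Finset.range j) (m - x)) := by
  rw [Finset.range_add_one, G_insert hZ hind 1 Finset.notMem_range_self m]
  exact Finset.sum_congr rfl fun x _ => by rw [p_eq hid j {x}]

lemma u_rec (n m : ℕ) :
    P (G Z 0 (Finset.range (n + 1)) m)
      = P (Z 1 ⁻¹' {0}) * P (G Z 0 (Finset.range n) m)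
        + ∑ x ∈ Finset.Icc 1 m, P (Z 1 ⁻¹' {x}) * P (G Z 0 (Finset.range n) (m - x)) := by
  rw [Finset.range_add_one, G_insert hZ hind 0 Finset.notMem_range_self m]
  have h0 : Finset.Icc 0 m = insert 0 (Finset.Icc 1 m) := by
    ext x; simp [Finset.mem_Icc, Finset.mem_insert]; omega
  rw [h0, Finset.sum_insert (by simp)]
  rw [p_eq hid n {0}, Nat.sub_zero]
  congr 1
  exact Finset.sum_congr rfl fun x _ => by rw [p_eq hid n {x}]

omit hZ hind hid in
lemma alg_step (p0 : ℝ≥0∞) (p : ℕ → ℝ≥0∞) (W : ℕ → ℕ → ℝ≥0∞)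
    (Wrec : ∀ j m, W (j + 1) m = ∑ x ∈ Finset.Icc 1 m, p x * W j (m - x)) (n m : ℕ) :
    p0 * (∑ j ∈ Finset.range (n + 1), (n.choose j : ℝ≥0∞) * (p0 ^ (n - j) * W j m))
      + ∑ x ∈ Finset.Icc 1 m, p x * (∑ j ∈ Finset.range (n + 1),
          (n.choose j : ℝ≥0∞) * (p0 ^ (n - j) * W j (m - x)))
    = ∑ j ∈ Finset.range (n + 2), (((n + 1).choose j : ℕ) : ℝ≥0∞) * (p0 ^ (n + 1 - j) * W j m) := by
  have term1 : p0 * (∑ j ∈ Finset.range (n + 1), (n.choose j : ℝ≥0∞) * (p0 ^ (n - j) * W j m))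
      = ∑ j ∈ Finset.range (n + 1), (n.choose j : ℝ≥0∞) * (p0 ^ (n + 1 - j) * W j m) := by
    rw [Finset.mul_sum]
    refine Finset.sum_congr rfl fun j hj => ?_
    have hjn : j ≤ n := Nat.lt_succ_iff.mp (Finset.mem_range.1 hj)
    have h1 : n + 1 - j = (n - j) + 1 := by omega
    rw [h1, pow_succ]
    ring
  have term2 : ∑ x ∈ Finset.Icc 1 m, p x * (∑ j ∈ Finset.range (n + 1),
        (n.choose j : ℝ≥0∞) * (p0 ^ (n - j) * W j (m - x)))
      = ∑ j ∈ Finset.range (n + 1), (n.choose j : ℝ≥0∞) * (p0 ^ (n - j) * W (j + 1) m) := by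
    calc ∑ x ∈ Finset.Icc 1 m, p x * (∑ j ∈ Finset.range (n + 1),
          (n.choose j : ℝ≥0∞) * (p0 ^ (n - j) * W j (m - x)))
        = ∑ x ∈ Finset.Icc 1 m, ∑ j ∈ Finset.range (n + 1),
            (n.choose j : ℝ≥0∞) * (p0 ^ (n - j) * (p x * W j (m - x))) := by
          refine Finset.sum_congr rfl fun x _ => ?_
          rw [Finset.mul_sum]
          exact Finset.sum_congr rfl fun j _ => by ring
      _ = ∑ j ∈ Finset.range (n + 1), ∑ x ∈ Finset.Icc 1 m,
            (n.choose j : ℝ≥0∞) * (p0 ^ (n - j) * (p x * W j (m - x))) := Finset.sum_comm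
      _ = ∑ j ∈ Finset.range (n + 1), (n.choose j : ℝ≥0∞) * (p0 ^ (n - j) * W (j + 1) m) := by
          refine Finset.sum_congr rfl fun j _ => ?_
          rw [Wrec j m, Finset.mul_sum, Finset.mul_sum]
  rw [term1, term2]
  rw [Finset.sum_range_succ' (fun j => (((n + 1).choose j : ℕ) : ℝ≥0∞) * (p0 ^ (n + 1 - j) * W j m)) (n + 1)]
  have split : ∀ j, ((((n + 1).choose (j + 1) : ℕ) : ℝ≥0∞)) * (p0 ^ (n + 1 - (j + 1)) * W (j + 1) m)
      = (n.choose j : ℝ≥0∞) * (p0 ^ (n - j) * W (j + 1) m)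
        + (n.choose (j + 1) : ℝ≥0∞) * (p0 ^ (n + 1 - (j + 1)) * W (j + 1) m) := by
    intro j
    have h1 : n + 1 - (j + 1) = n - j := by omega
    rw [Nat.choose_succ_succ, Nat.cast_add, add_mul, h1]
  simp only [split]
  rw [Finset.sum_add_distrib]
  have last : ∑ j ∈ Finset.range (n + 1),
        (n.choose (j + 1) : ℝ≥0∞) * (p0 ^ (n + 1 - (j + 1)) * W (j + 1) m)
        + (((n + 1).choose 0 : ℕ) : ℝ≥0∞) * (p0 ^ (n + 1 - 0) * W 0 m)
      = ∑ j ∈ Finset.range (n + 1), (n.choose j : ℝ≥0∞) * (p0 ^ (n + 1 - j) * W j m) := by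
    rw [Nat.choose_zero_right]
    have : (((n + 1).choose 0 : ℕ) : ℝ≥0∞) = ((n.choose 0 : ℕ) : ℝ≥0∞) := by simp
    calc ∑ j ∈ Finset.range (n + 1),
          (n.choose (j + 1) : ℝ≥0∞) * (p0 ^ (n + 1 - (j + 1)) * W (j + 1) m)
          + (((n + 1).choose 0 : ℕ) : ℝ≥0∞) * (p0 ^ (n + 1 - 0) * W 0 m)
        = ∑ j ∈ Finset.range (n + 2), (n.choose j : ℝ≥0∞) * (p0 ^ (n + 1 - j) * W j m) := by
          rw [Finset.sum_range_succ' (fun j => (n.choose j : ℝ≥0∞) * (p0 ^ (n + 1 - j) * W j m)) (n + 1), this]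
      _ = ∑ j ∈ Finset.range (n + 1), (n.choose j : ℝ≥0∞) * (p0 ^ (n + 1 - j) * W j m) := by
          rw [Finset.sum_range_succ (fun j => (n.choose j : ℝ≥0∞) * (p0 ^ (n + 1 - j) * W j m)) (n + 1),
            Nat.choose_succ_self, Nat.cast_zero, zero_mul, add_zero]
  rw [← last]
  ring

lemma u_closed (n m : ℕ) :
    P (G Z 0 (Finset.range n) m)
      = ∑ j ∈ Finset.range (n + 1),
          (n.choose j : ℝ≥0∞) * (P (Z 1 ⁻¹' {0}) ^ (n - j) * P (G Z 1 (Finset.range j) m)) := by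
  induction n generalizing m with
  | zero => simp [G_empty (Z := Z)]
  | succ n ih =>
    rw [u_rec hZ hind hid n m, ih m]
    have h2 : ∑ x ∈ Finset.Icc 1 m, P (Z 1 ⁻¹' {x}) * P (G Z 0 (Finset.range n) (m - x))
        = ∑ x ∈ Finset.Icc 1 m, P (Z 1 ⁻¹' {x}) * (∑ j ∈ Finset.range (n + 1),
            (n.choose j : ℝ≥0∞) * (P (Z 1 ⁻¹' {0}) ^ (n - j) * P (G Z 1 (Finset.range j) (m - x)))) :=
      Finset.sum_congr rfl fun x _ => by rw [ih (m - x)]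
    rw [h2]
    exact alg_step (P (Z 1 ⁻¹' {0})) (fun x => P (Z 1 ⁻¹' {x}))
      (fun j m => P (G Z 1 (Finset.range j) m)) (fun j m => w_rec hZ hind hid j m) n m
include hZ hind hid

/-- the `j > m` terms vanish; switch the summation index set. -/
lemma u_switch (n m k : ℕ) (hmk : m ≤ k) :
    P (G Z 0 (Finset.range n) m)
      = P (Z 1 ⁻¹' {0}) ^ n + ∑ j ∈ Finset.Icc 1 k,
          (n.choose j : ℝ≥0∞) * (P (Z 1 ⁻¹' {0}) ^ (n - j) * P (G Z 1 (Finset.range j) m)) := by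
  classical
  set f : ℕ → ℝ≥0∞ := fun j =>
    (n.choose j : ℝ≥0∞) * (P (Z 1 ⁻¹' {0}) ^ (n - j) * P (G Z 1 (Finset.range j) m)) with hf
  have hvan : ∀ j, m < j → f j = 0 := by
    intro j hj
    have : G Z 1 (Finset.range j) m = ∅ := G_vanish (by simpa using hj)
    simp [hf, this]
  have hchoose : ∀ j, n < j → f j = 0 := by
    intro j hj
    simp [hf, Nat.choose_eq_zero_of_lt hj]
  have hbig : ∀ j, n + k + 1 ≤ j → f j = 0 := fun j hj => hchoose j (by omega)
  have e1 : ∑ j ∈ Finset.range (n + 1), f j = ∑ j ∈ Finset.range (n + k + 2), f j := by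
    refine Finset.sum_subset (Finset.range_subset_range.2 (by omega)) ?_
    intro x _ hx
    simp only [Finset.mem_range, not_lt] at hx
    exact hchoose x (by omega)
  have e2 : ∑ j ∈ Finset.range (k + 1), f j = ∑ j ∈ Finset.range (n + k + 2), f j := by
    refine Finset.sum_subset (Finset.range_subset_range.2 (by omega)) ?_
    · intro x _ hx
      simp only [Finset.mem_range, not_lt] at hx
      exact hvan x (by omega)
  have e3 : ∑ j ∈ Finset.range (k + 1), f j = f 0 + ∑ j ∈ Finset.Icc 1 k, f j := by
    have : Finset.range (k + 1) = insert 0 (Finset.Icc 1 k) := by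
      ext x; simp [Finset.mem_range, Finset.mem_Icc, Finset.mem_insert]; omega
    rw [this, Finset.sum_insert (by simp)]
  have hf0 : f 0 = P (Z 1 ⁻¹' {0}) ^ n := by
    have hG : G Z 1 (∅ : Finset ℕ) m = Set.univ := by ext ω; simp [G]
    simp [hf, hG]
  rw [u_closed hZ hind hid n m, e1, ← e2, e3, hf0]

/-- the main partition identity, in `ℝ≥0∞`. -/
lemma main_ennreal (k n : ℕ) :
    P {ω | Z 0 ω * ∑ i ∈ Finset.range n, Z (i + 1) ω ≤ k}
      = P (Z 0 ⁻¹' {0})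
        + (∑ y ∈ Finset.Icc 1 k, P (Z 0 ⁻¹' {y}) + P (Z 0 ⁻¹' Set.Ioi k)) * P (Z 1 ⁻¹' {0}) ^ n
        + ∑ j ∈ Finset.Icc 1 k, (n.choose j : ℝ≥0∞) * P (Z 1 ⁻¹' {0}) ^ (n - j)
            * ∑ y ∈ Finset.Icc 1 k, P (Z 0 ⁻¹' {y}) * P (G Z 1 (Finset.range j) (k / y)) := by
  classical
  set B1 : Set Ω := ⋃ y ∈ Finset.Icc 1 k, (Z 0 ⁻¹' {y} ∩ G Z 0 (Finset.range n) (k / y)) with hB1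
  set B2 : Set Ω := Z 0 ⁻¹' Set.Ioi k ∩ G Z 0 (Finset.range n) 0 with hB2
  have hpart : {ω | Z 0 ω * ∑ i ∈ Finset.range n, Z (i + 1) ω ≤ k}
      = (Z 0 ⁻¹' {0} ∪ B1) ∪ B2 := by
    ext ω
    simp only [Set.mem_setOf_eq, Set.mem_union, hB1, hB2, Set.mem_iUnion, Set.mem_inter_iff,
      Set.mem_preimage, Set.mem_singleton_iff, Finset.mem_Icc, Set.mem_Ioi, exists_prop, G,
      Set.mem_setOf_eq]
    constructor
    · intro h
      rcases Nat.lt_or_ge k (Z 0 ω) with hk | hk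
      · refine Or.inr ⟨hk, fun i _ => Nat.zero_le _, ?_⟩
        by_contra hS
        have h1 : 1 ≤ ∑ i ∈ Finset.range n, Z (i + 1) ω := by omega
        have := Nat.mul_le_mul_left (Z 0 ω) h1
        omega
      · rcases Nat.eq_zero_or_pos (Z 0 ω) with h0 | h0
        · exact Or.inl (Or.inl h0)
        · refine Or.inl (Or.inr ⟨Z 0 ω, ⟨h0, hk⟩, rfl, fun i _ => Nat.zero_le _, ?_⟩)
          rw [Nat.le_div_iff_mul_le h0, Nat.mul_comm]
          exact h
    · rintro ((h0 | ⟨y, ⟨hy1, hyk⟩, hZy, _, hS⟩) | ⟨hk, _, hS⟩)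
      · simp [h0]
      · rw [hZy]
        calc y * ∑ i ∈ Finset.range n, Z (i + 1) ω ≤ y * (k / y) :=
              Nat.mul_le_mul_left y hS
          _ ≤ k := Nat.mul_div_le k y
      · have : ∑ i ∈ Finset.range n, Z (i + 1) ω = 0 := by omega
        rw [this, Nat.mul_zero]
        exact Nat.zero_le k
  have hmeasB1 : MeasurableSet B1 :=
    Finset.measurableSet_biUnion _ fun y _ =>
      (hZ 0 (measurableSet_singleton y)).inter (measurable_G hZ 0 _ _)
  have hmeasB2 : MeasurableSet B2 :=
    (hZ 0 measurableSet_Ioi).inter (measurable_G hZ 0 _ _)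
  have hd01 : Disjoint (Z 0 ⁻¹' {0}) B1 := by
    refine Set.disjoint_left.2 fun ω h0 hω => ?_
    simp only [Set.mem_preimage, Set.mem_singleton_iff] at h0
    simp only [hB1, Set.mem_iUnion, Set.mem_inter_iff, Set.mem_preimage,
      Set.mem_singleton_iff, Finset.mem_Icc, exists_prop] at hω
    obtain ⟨y, ⟨hy1, _⟩, hy, _⟩ := hω
    omega
  have hd2 : Disjoint (Z 0 ⁻¹' {0} ∪ B1) B2 := by
    refine Set.disjoint_left.2 fun ω hω h2 => ?_
    simp only [hB2, Set.mem_inter_iff, Set.mem_preimage, Set.mem_Ioi] at h2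
    rcases hω with h0 | h1
    · simp only [Set.mem_preimage, Set.mem_singleton_iff] at h0
      omega
    · simp only [hB1, Set.mem_iUnion, Set.mem_inter_iff, Set.mem_preimage,
        Set.mem_singleton_iff, Finset.mem_Icc, exists_prop] at h1
      obtain ⟨y, ⟨_, hyk⟩, hy, _⟩ := h1
      omega
  rw [hpart, measure_union hd2 hmeasB2, measure_union hd01 hmeasB1]
  have hPB1 : P B1 = ∑ y ∈ Finset.Icc 1 k, P (Z 0 ⁻¹' {y}) * P (G Z 0 (Finset.range n) (k / y)) := by
    rw [hB1, measure_biUnion_finset ?_ fun y _ =>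
      (hZ 0 (measurableSet_singleton y)).inter (measurable_G hZ 0 _ _)]
    · exact Finset.sum_congr rfl fun y _ =>
        indep_single hZ hind (fun i _ h => by omega) {y} 0 (k / y)
    · intro x _ y _ hxy
      simp only [Function.onFun]
      refine Set.disjoint_left.2 fun ω ⟨hx, _⟩ ⟨hy, _⟩ => hxy ?_
      simp only [Set.mem_preimage, Set.mem_singleton_iff] at hx hy
      omega
  have hPB2 : P B2 = P (Z 0 ⁻¹' Set.Ioi k) * P (Z 1 ⁻¹' {0}) ^ n := by
    rw [hB2, indep_single hZ hind (fun i _ h => by omega) (Set.Ioi k) 0 0,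
      u_switch hZ hind hid n 0 k (Nat.zero_le k)]
    have : ∀ j ∈ Finset.Icc 1 k, (n.choose j : ℝ≥0∞)
        * (P (Z 1 ⁻¹' {0}) ^ (n - j) * P (G Z 1 (Finset.range j) 0)) = 0 := by
      intro j hj
      have hj1 : 1 ≤ j := (Finset.mem_Icc.1 hj).1
      have : G Z 1 (Finset.range j) (0 : ℕ) = ∅ := G_vanish (by rw [Finset.card_range]; omega)
      simp [this]
    rw [Finset.sum_congr rfl this]
    simp
  rw [hPB1, hPB2]
  have hu : ∀ y ∈ Finset.Icc 1 k, P (Z 0 ⁻¹' {y}) * P (G Z 0 (Finset.range n) (k / y))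
      = P (Z 0 ⁻¹' {y}) * (P (Z 1 ⁻¹' {0}) ^ n + ∑ j ∈ Finset.Icc 1 k,
          (n.choose j : ℝ≥0∞) * (P (Z 1 ⁻¹' {0}) ^ (n - j) * P (G Z 1 (Finset.range j) (k / y)))) := by
    intro y hy
    rw [u_switch hZ hind hid n (k / y) k (Nat.div_le_self k y)]
  rw [Finset.sum_congr rfl hu]
  have swap : ∑ y ∈ Finset.Icc 1 k, P (Z 0 ⁻¹' {y}) * (∑ j ∈ Finset.Icc 1 k,
        (n.choose j : ℝ≥0∞) * (P (Z 1 ⁻¹' {0}) ^ (n - j) * P (G Z 1 (Finset.range j) (k / y))))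
      = ∑ j ∈ Finset.Icc 1 k, (n.choose j : ℝ≥0∞) * P (Z 1 ⁻¹' {0}) ^ (n - j)
          * ∑ y ∈ Finset.Icc 1 k, P (Z 0 ⁻¹' {y}) * P (G Z 1 (Finset.range j) (k / y)) := by
    calc ∑ y ∈ Finset.Icc 1 k, P (Z 0 ⁻¹' {y}) * (∑ j ∈ Finset.Icc 1 k,
          (n.choose j : ℝ≥0∞) * (P (Z 1 ⁻¹' {0}) ^ (n - j) * P (G Z 1 (Finset.range j) (k / y))))
        = ∑ y ∈ Finset.Icc 1 k, ∑ j ∈ Finset.Icc 1 k, (n.choose j : ℝ≥0∞)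
            * P (Z 1 ⁻¹' {0}) ^ (n - j) * (P (Z 0 ⁻¹' {y}) * P (G Z 1 (Finset.range j) (k / y))) := by
          refine Finset.sum_congr rfl fun y _ => ?_
          rw [Finset.mul_sum]
          exact Finset.sum_congr rfl fun j _ => by ring
      _ = ∑ j ∈ Finset.Icc 1 k, ∑ y ∈ Finset.Icc 1 k, (n.choose j : ℝ≥0∞)
            * P (Z 1 ⁻¹' {0}) ^ (n - j) * (P (Z 0 ⁻¹' {y}) * P (G Z 1 (Finset.range j) (k / y))) :=
          Finset.sum_comm
      _ = _ := by
          refine Finset.sum_congr rfl fun j _ => ?_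
          rw [Finset.mul_sum]
  simp only [mul_add]
  rw [Finset.sum_add_distrib, ← Finset.sum_mul, swap, add_mul]
  ring
end
end CdfAux

open CdfAux in
/-- Lemma 5.9 (sum_of_indep_copies_times_rv): `Z 0 = Y` and `Z (i+1) = X_i` form a
mutually independent family of ℕ-valued random variables, with `X₁, X₂, …` identically
distributed. With `p₀ = P(X₁ = 0)` and `q₀ = P(Y = 0)` there exist nonnegative
`z₁, …, z_k` with `P(Y·∑_{i<n} X_i ≤ k) = q₀ + (1-q₀) p₀^n + ∑_{j=1}^k C(n,j) p₀^{n-j} z_j`. -/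
theorem cdf_rv_times_sum_of_indep_copies
    {Ω : Type*} [MeasurableSpace Ω] (P : Measure Ω) [IsProbabilityMeasure P]
    (Z : ℕ → Ω → ℕ) (hZ : ∀ i, Measurable (Z i))
    (hind : iIndepFun Z P)
    (hid : ∀ i j : ℕ, IdentDistrib (Z (i + 1)) (Z (j + 1)) P P)
    (k : ℕ) :
    ∃ z : ℕ → ℝ, (∀ j, 1 ≤ j → j ≤ k → 0 ≤ z j) ∧
      ∀ n : ℕ,
        (P {ω | Z 0 ω * ∑ i ∈ Finset.range n, Z (i + 1) ω ≤ k}).toReal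
          = (P {ω | Z 0 ω = 0}).toReal
            + (1 - (P {ω | Z 0 ω = 0}).toReal) * (P {ω | Z 1 ω = 0}).toReal ^ n
            + ∑ j ∈ Finset.Icc 1 k,
                (n.choose j : ℝ) * (P {ω | Z 1 ω = 0}).toReal ^ (n - j) * z j := by
  classical
  set q0 : ℝ≥0∞ := P (Z 0 ⁻¹' {0}) with hq0
  set p0 : ℝ≥0∞ := P (Z 1 ⁻¹' {0}) with hp0
  set r : ℝ≥0∞ := ∑ y ∈ Finset.Icc 1 k, P (Z 0 ⁻¹' {y}) + P (Z 0 ⁻¹' Set.Ioi k) with hr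
  set ζ : ℕ → ℝ≥0∞ := fun j =>
    ∑ y ∈ Finset.Icc 1 k, P (Z 0 ⁻¹' {y}) * P (G Z 1 (Finset.range j) (k / y)) with hζ
  have hζ_ne_top : ∀ j, ζ j ≠ ∞ := fun j =>
    (ENNReal.sum_lt_top.2 fun y _ =>
      ENNReal.mul_lt_top (measure_lt_top P _) (measure_lt_top P _)).ne
  have hr_ne_top : r ≠ ∞ :=
    (ENNReal.add_lt_top.2 ⟨ENNReal.sum_lt_top.2 fun y _ => measure_lt_top P _,
      measure_lt_top P _⟩).ne
  -- the partition of unity: q0 + r = 1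
  have htotal : q0 + r = 1 := by
    have hIic : P (Z 0 ⁻¹' Set.Iic k) = ∑ y ∈ Finset.Icc 0 k, P (Z 0 ⁻¹' {y}) := by
      have hset : Z 0 ⁻¹' Set.Iic k = ⋃ y ∈ Finset.Icc 0 k, Z 0 ⁻¹' {y} := by
        ext ω
        simp only [Set.mem_preimage, Set.mem_Iic, Set.mem_iUnion, Finset.mem_Icc,
          Set.mem_singleton_iff, exists_prop]
        constructor
        · intro h; exact ⟨Z 0 ω, ⟨Nat.zero_le _, h⟩, rfl⟩
        · rintro ⟨y, ⟨_, hy⟩, e⟩; omega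
      rw [hset, measure_biUnion_finset ?_ fun y _ => hZ 0 (measurableSet_singleton y)]
      intro x _ y _ hxy
      simp only [Function.onFun]
      refine Set.disjoint_left.2 fun ω hx hy => hxy ?_
      simp only [Set.mem_preimage, Set.mem_singleton_iff] at hx hy
      omega
    have hsplit : ∑ y ∈ Finset.Icc 0 k, P (Z 0 ⁻¹' {y})
        = q0 + ∑ y ∈ Finset.Icc 1 k, P (Z 0 ⁻¹' {y}) := by
      have : Finset.Icc 0 k = insert 0 (Finset.Icc 1 k) := by
        ext x; simp [Finset.mem_Icc, Finset.mem_insert]; omega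
      rw [this, Finset.sum_insert (by simp)]
    have hcompl : P (Z 0 ⁻¹' Set.Iic k) + P (Z 0 ⁻¹' Set.Ioi k) = 1 := by
      rw [← measure_union ((Set.Iic_disjoint_Ioi le_rfl).preimage (Z 0))
        (hZ 0 measurableSet_Ioi), ← Set.preimage_union, Set.Iic_union_Ioi,
        Set.preimage_univ, measure_univ]
    rw [hr, ← add_assoc, hq0, ← hsplit, ← hIic, hcompl]
  refine ⟨fun j => (ζ j).toReal, fun j _ _ => ENNReal.toReal_nonneg, fun n => ?_⟩
  have hmain := main_ennreal hZ hind hid k n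
  have hs1 : {ω | Z 0 ω = 0} = Z 0 ⁻¹' {0} := rfl
  have hs2 : {ω | Z 1 ω = 0} = Z 1 ⁻¹' {0} := rfl
  rw [hs1, hs2, hmain, ← hq0, ← hp0, ← hr]
  have hζj : ∀ j, ∑ y ∈ Finset.Icc 1 k, P (Z 0 ⁻¹' {y}) * P (G Z 1 (Finset.range j) (k / y)) = ζ j :=
    fun j => rfl
  simp only [hζj]
  have h1 : r * p0 ^ n ≠ ∞ := ENNReal.mul_ne_top hr_ne_top
    (ENNReal.pow_ne_top (measure_ne_top P _))
  have h2 : ∀ j ∈ Finset.Icc 1 k, (n.choose j : ℝ≥0∞) * p0 ^ (n - j) * ζ j ≠ ∞ := fun j _ =>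
    ENNReal.mul_ne_top (ENNReal.mul_ne_top (ENNReal.natCast_ne_top _)
      (ENNReal.pow_ne_top (measure_ne_top P _))) (hζ_ne_top j)
  rw [ENNReal.toReal_add (ENNReal.add_ne_top.2 ⟨measure_ne_top P _, h1⟩)
      (ENNReal.sum_lt_top.2 fun j hj => (h2 j hj).lt_top).ne,
    ENNReal.toReal_add (measure_ne_top P _) h1, ENNReal.toReal_mul, ENNReal.toReal_pow,
    ENNReal.toReal_sum h2]
  have hrtoReal : r.toReal = 1 - q0.toReal := by
    have := congrArg ENNReal.toReal htotal
    rw [ENNReal.toReal_add (measure_ne_top P _) hr_ne_top, ENNReal.toReal_one] at this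
    linarith
  rw [hrtoReal]
  congr 1
  exact Finset.sum_congr rfl fun j _ => by
    rw [ENNReal.toReal_mul, ENNReal.toReal_mul, ENNReal.toReal_pow, ENNReal.toReal_natCast]
end

section
/- Let X₁, X₂, X₃, … be i.i.d. ℕ-valued random variables on a probability space (Ω,P), let k ∈ ℕ, and write p_ℓ := P(X₁ = ℓ) for ℓ ∈ ℕ. For j = 0,…,k define y_j := ∑_{(n₁,…,n_k)} ( j! / (n₁!·⋯·n_k!) ) · ∏_{ℓ=1}^{k} p_ℓ^{n_ℓ}, the sum ranging over all tuples (n₁,…,n_k) ∈ ℕ^k with ∑_{ℓ=1}^{k} n_ℓ = j and ∑_{ℓ=1}^{k} ℓ·n_ℓ ≤ k (so in particular y₀ = 1). Then for all n ∈ ℕ: P( ∑_{i=1}^{n} X_i ≤ k ) = ∑_{j=0}^{k} C(n,j) · p₀^{n−j} · y_j, where C(n,j) is the binomial coefficient (equal to 0 for j > n). -/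
open Finset Polynomial

lemma inner_conv (p : ℕ → ℝ) (k j : ℕ) (hj : j ≤ k) :
    ∑ m ∈ (Finset.piAntidiag (range k) j).filter
        (fun m => ∑ ℓ ∈ range k, (ℓ + 1) * m ℓ ≤ k),
      (Nat.multinomial (range k) m : ℝ) * ∏ ℓ ∈ range k, p (ℓ + 1) ^ m ℓ
    = ∑ m ∈ Finset.univ.filter
        (fun m : Fin k → Fin (k + 1) =>
          (∑ ℓ : Fin k, (m ℓ : ℕ)) = j ∧
            ∑ ℓ : Fin k, ((ℓ : ℕ) + 1) * (m ℓ : ℕ) ≤ k),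
        (Nat.multinomial Finset.univ (fun ℓ : Fin k => (m ℓ : ℕ)) : ℝ)
          * ∏ ℓ : Fin k, p ((ℓ : ℕ) + 1) ^ (m ℓ : ℕ) := by
  classical
  have hmem : ∀ a ∈ (Finset.piAntidiag (range k) j).filter
      (fun m => ∑ ℓ ∈ range k, (ℓ + 1) * m ℓ ≤ k),
      (∑ ℓ ∈ range k, a ℓ = j) ∧ (∀ i, a i ≠ 0 → i ∈ range k)
        ∧ (∀ ℓ, a ℓ ≤ k) ∧ ∑ ℓ ∈ range k, (ℓ + 1) * a ℓ ≤ k := by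
    intro a ha
    rw [Finset.mem_filter, Finset.mem_piAntidiag] at ha
    obtain ⟨⟨hsum, hsupp⟩, hwt⟩ := ha
    refine ⟨hsum, hsupp, fun ℓ => ?_, hwt⟩
    by_cases hℓ : ℓ ∈ range k
    · exact le_trans (hsum ▸ Finset.single_le_sum (fun _ _ => Nat.zero_le _) hℓ) hj
    · by_contra h
      exact hℓ (hsupp ℓ (by omega))
  refine Finset.sum_nbij'
    (i := fun m => fun ℓ : Fin k => (⟨min (m ℓ) k, by omega⟩ : Fin (k + 1)))
    (j := fun m => fun ℓ : ℕ => if h : ℓ < k then (m ⟨ℓ, h⟩ : ℕ) else 0)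
    ?_ ?_ ?_ ?_ ?_
  · intro a ha
    obtain ⟨hsum, hsupp, hle, hwt⟩ := hmem a ha
    simp only [Finset.mem_filter, Finset.mem_univ, true_and]
    constructor
    · have h1 : ∑ ℓ : Fin k, min (a ℓ) k = ∑ ℓ : Fin k, a (ℓ : ℕ) :=
        Finset.sum_congr rfl fun ℓ _ => Nat.min_eq_left (hle ℓ)
      rw [h1, ← Finset.sum_range (fun ℓ => a ℓ)]
      exact hsum
    · have h1 : ∑ ℓ : Fin k, ((ℓ : ℕ) + 1) * min (a ℓ) k
          = ∑ ℓ : Fin k, ((ℓ : ℕ) + 1) * a (ℓ : ℕ) :=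
        Finset.sum_congr rfl fun ℓ _ => by rw [Nat.min_eq_left (hle ℓ)]
      rw [h1, ← Finset.sum_range (fun ℓ => (ℓ + 1) * a ℓ)]
      exact hwt
  · intro a ha
    simp only [Finset.mem_filter, Finset.mem_univ, true_and] at ha
    obtain ⟨hsum, hwt⟩ := ha
    rw [Finset.mem_filter, Finset.mem_piAntidiag]
    refine ⟨⟨?_, fun i hi => ?_⟩, ?_⟩
    · rw [← hsum, Finset.sum_range (fun ℓ => if h : ℓ < k then (a ⟨ℓ, h⟩ : ℕ) else 0)]
      exact Finset.sum_congr rfl fun ℓ _ => by simp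
    · by_contra h
      exact hi (dif_neg (by simpa using h))
    · rw [Finset.sum_range (fun ℓ => (ℓ + 1) * (if h : ℓ < k then (a ⟨ℓ, h⟩ : ℕ) else 0))]
      calc ∑ ℓ : Fin k, ((ℓ : ℕ) + 1) * (if h : (ℓ : ℕ) < k then (a ⟨(ℓ : ℕ), h⟩ : ℕ) else 0)
          = ∑ ℓ : Fin k, ((ℓ : ℕ) + 1) * (a ℓ : ℕ) :=
            Finset.sum_congr rfl fun ℓ _ => by simp
        _ ≤ k := hwt
  · intro a ha
    obtain ⟨hsum, hsupp, hle, hwt⟩ := hmem a ha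
    funext ℓ
    by_cases h : ℓ < k
    · simp [h, Nat.min_eq_left (hle ℓ)]
    · simp only [dif_neg h]
      by_contra hne
      exact h (Finset.mem_range.mp (hsupp ℓ (Ne.symm hne)))
  · intro a _
    funext ℓ
    ext
    simp [ℓ.isLt, Nat.lt_succ_iff.mp (a ℓ).isLt, Nat.min_eq_left]
  · intro a ha
    obtain ⟨hsum, hsupp, hle, hwt⟩ := hmem a ha
    have hmin : ∀ ℓ : Fin k, min (a (ℓ : ℕ)) k = a (ℓ : ℕ) := fun ℓ => Nat.min_eq_left (hle ℓ)
    congr 1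
    · norm_cast
      unfold Nat.multinomial
      rw [Finset.sum_range (fun ℓ => a ℓ), Finset.prod_range (fun ℓ => Nat.factorial (a ℓ))]
      simp only [hmin]
    · rw [Finset.prod_range (fun ℓ => p (ℓ + 1) ^ a ℓ)]
      exact Finset.prod_congr rfl fun ℓ _ => by simp [hmin]


lemma multinomial_sum_eq (p : ℕ → ℝ) (k n : ℕ)
    (inner_conv : ∀ j ≤ k,
      ∑ m ∈ (Finset.piAntidiag (range k) j).filter
          (fun m => ∑ ℓ ∈ range k, (ℓ + 1) * m ℓ ≤ k),
        (Nat.multinomial (range k) m : ℝ) * ∏ ℓ ∈ range k, p (ℓ + 1) ^ m ℓ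
      = ∑ m ∈ Finset.univ.filter
          (fun m : Fin k → Fin (k + 1) =>
            (∑ ℓ : Fin k, (m ℓ : ℕ)) = j ∧
              ∑ ℓ : Fin k, ((ℓ : ℕ) + 1) * (m ℓ : ℕ) ≤ k),
          (Nat.multinomial Finset.univ (fun ℓ : Fin k => (m ℓ : ℕ)) : ℝ)
            * ∏ ℓ : Fin k, p ((ℓ : ℕ) + 1) ^ (m ℓ : ℕ)) :
    ∑ g ∈ (Fintype.piFinset fun _ : Fin n => Finset.range (k + 1)).filter
        (fun g => ∑ i, g i ≤ k), ∏ i, p (g i)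
      = ∑ j ∈ Finset.range (k + 1),
          (n.choose j : ℝ) * p 0 ^ (n - j)
            * ∑ m ∈ Finset.univ.filter
                (fun m : Fin k → Fin (k + 1) =>
                  (∑ ℓ : Fin k, (m ℓ : ℕ)) = j ∧
                    ∑ ℓ : Fin k, ((ℓ : ℕ) + 1) * (m ℓ : ℕ) ≤ k),
                (Nat.multinomial Finset.univ (fun ℓ : Fin k => (m ℓ : ℕ)) : ℝ)
                  * ∏ ℓ : Fin k, p ((ℓ : ℕ) + 1) ^ (m ℓ : ℕ) := by
  classical
  set Q : ℝ[X] := ∑ ℓ ∈ range (k + 1), C (p ℓ) * X ^ ℓ with hQdef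
  have hQn : Q ^ n = ∑ g ∈ Fintype.piFinset (fun _ : Fin n => range (k + 1)),
      C (∏ i, p (g i)) * X ^ (∑ i, g i) := by
    have : Q ^ n = ∏ _i : Fin n, Q := by
      simp [Finset.prod_const]
    rw [this, hQdef, Finset.prod_univ_sum]
    refine Finset.sum_congr rfl fun g _ => ?_
    rw [Finset.prod_mul_distrib, ← map_prod, Finset.prod_pow_eq_pow_sum]
  have hL : (∑ g ∈ (Fintype.piFinset fun _ : Fin n => Finset.range (k + 1)).filter
        (fun g => ∑ i, g i ≤ k), ∏ i, p (g i))
      = ∑ s ∈ range (k + 1), (Q ^ n).coeff s := by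
    rw [hQn]
    simp only [Polynomial.finset_sum_coeff, Polynomial.coeff_C_mul, Polynomial.coeff_X_pow]
    rw [Finset.sum_comm, Finset.sum_filter]
    refine Finset.sum_congr rfl fun g _ => ?_
    simp only [mul_ite, mul_one, mul_zero]
    rw [Finset.sum_ite_eq' (range (k + 1)) (∑ i, g i)]
    simp [Nat.lt_succ_iff]
  -- second expansion
  set R : ℝ[X] := ∑ ℓ ∈ range k, C (p (ℓ + 1)) * X ^ (ℓ + 1) with hRdef
  have hQR : Q = R + C (p 0) := by
    rw [hQdef, Finset.sum_range_succ']
    simp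
    exact hRdef.symm
  have hRj : ∀ j : ℕ, R ^ j = ∑ m ∈ Finset.piAntidiag (range k) j,
      C ((Nat.multinomial (range k) m : ℝ) * ∏ ℓ ∈ range k, p (ℓ + 1) ^ m ℓ)
        * X ^ (∑ ℓ ∈ range k, (ℓ + 1) * m ℓ) := by
    intro j
    rw [hRdef, Finset.sum_pow_eq_sum_piAntidiag]
    refine Finset.sum_congr rfl fun m _ => ?_
    rw [map_mul, map_prod]
    simp only [mul_pow, ← C_pow, ← pow_mul, Finset.prod_mul_distrib, Polynomial.C_eq_natCast,
      Finset.prod_pow_eq_pow_sum]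
    ring
  have hQpow : Q ^ n = ∑ j ∈ range (n + 1), ∑ m ∈ Finset.piAntidiag (range k) j,
      C ((n.choose j : ℝ) * p 0 ^ (n - j) * ((Nat.multinomial (range k) m : ℝ)
          * ∏ ℓ ∈ range k, p (ℓ + 1) ^ m ℓ))
        * X ^ (∑ ℓ ∈ range k, (ℓ + 1) * m ℓ) := by
    rw [hQR, add_pow]
    refine Finset.sum_congr rfl fun j _ => ?_
    rw [hRj j, Finset.sum_mul, Finset.sum_mul]
    refine Finset.sum_congr rfl fun m _ => ?_
    have hcomb : ∀ (A B D : ℝ) (Y : ℝ[X]), C A * Y * C B * C D = C (D * B * A) * Y := by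
      intro A B D Y
      rw [mul_assoc (C A * Y), ← C.map_mul, mul_assoc, mul_comm Y, ← mul_assoc, ← C.map_mul]
      congr 1
      ring
    rw [← C.map_pow, ← C_eq_natCast, hcomb]
  -- extract coefficients on the RHS expansion
  set F : ℕ → ℝ := fun j => (n.choose j : ℝ) * p 0 ^ (n - j)
      * ∑ m ∈ (Finset.piAntidiag (range k) j).filter
          (fun m => ∑ ℓ ∈ range k, (ℓ + 1) * m ℓ ≤ k),
        (Nat.multinomial (range k) m : ℝ) * ∏ ℓ ∈ range k, p (ℓ + 1) ^ m ℓ with hF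
  have hR : (∑ s ∈ range (k + 1), (Q ^ n).coeff s) = ∑ j ∈ range (n + 1), F j := by
    rw [hQpow]
    simp only [Polynomial.finset_sum_coeff, Polynomial.coeff_C_mul, Polynomial.coeff_X_pow]
    rw [Finset.sum_comm]
    refine Finset.sum_congr rfl fun j _ => ?_
    rw [Finset.sum_comm]
    simp only [hF, Finset.mul_sum, Finset.sum_filter]
    refine Finset.sum_congr rfl fun m _ => ?_
    simp only [mul_ite, mul_one, mul_zero]
    rw [Finset.sum_ite_eq' (range (k + 1)) (∑ ℓ ∈ range k, (ℓ + 1) * m ℓ)]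
    simp only [Finset.mem_range, Nat.lt_succ_iff]
  have hFk : ∀ j, k < j → F j = 0 := by
    intro j hkj
    rw [hF]
    have : (Finset.piAntidiag (range k) j).filter
        (fun m => ∑ ℓ ∈ range k, (ℓ + 1) * m ℓ ≤ k) = ∅ := by
      rw [Finset.filter_eq_empty_iff]
      intro m hm
      rw [Finset.mem_piAntidiag] at hm
      have : j ≤ ∑ ℓ ∈ range k, (ℓ + 1) * m ℓ := by
        rw [← hm.1]
        exact Finset.sum_le_sum fun i _ => Nat.le_mul_of_pos_left _ (by omega)
      omega
    simp [this]
  have hFn : ∀ j, n < j → F j = 0 := by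
    intro j hnj
    simp [hF, Nat.choose_eq_zero_of_lt hnj]
  have hswap : ∑ j ∈ range (n + 1), F j = ∑ j ∈ range (k + 1), F j := by
    have h1 : ∑ j ∈ range (n + 1), F j = ∑ j ∈ range (max n k + 1), F j :=
      Finset.sum_subset (Finset.range_subset_range.mpr (by omega))
        (fun x _ hx => hFn x (by simp at hx; omega))
    have h2 : ∑ j ∈ range (k + 1), F j = ∑ j ∈ range (max n k + 1), F j :=
      Finset.sum_subset (Finset.range_subset_range.mpr (by omega))
        (fun x _ hx => hFk x (by simp at hx; omega))
    rw [h1, h2]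
  rw [hL, hR, hswap]
  refine Finset.sum_congr rfl fun j hj => ?_
  simp only [hF]
  rw [inner_conv j (Nat.lt_succ_iff.mp (Finset.mem_range.mp hj))]


open MeasureTheory ProbabilityTheory Finset

/-- The explicit form of Lemma B.2: for i.i.d. ℕ-valued random variables `X₀, X₁, …`,
with `p_ℓ = P(X₀ = ℓ)` and `y_j` the multinomial sums over tuples `(n₁,…,n_k)` with
`∑ n_ℓ = j` and `∑ ℓ·n_ℓ ≤ k`,
`P(∑_{i<n} X_i ≤ k) = ∑_{j=0}^k C(n,j) p₀^{n-j} y_j` for all `n`. -/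
theorem cdf_sum_of_indep_copies_explicit
    {Ω : Type*} [MeasurableSpace Ω] (P : Measure Ω) [IsProbabilityMeasure P]
    (X : ℕ → Ω → ℕ) (hX : ∀ i, Measurable (X i))
    (hind : iIndepFun X P)
    (hid : ∀ i j, IdentDistrib (X i) (X j) P P)
    (k n : ℕ) :
    (P {ω | ∑ i ∈ Finset.range n, X i ω ≤ k}).toReal
      = ∑ j ∈ Finset.range (k + 1),
          (n.choose j : ℝ) * (P {ω | X 0 ω = 0}).toReal ^ (n - j)
            * ∑ m ∈ Finset.univ.filter
                (fun m : Fin k → Fin (k + 1) =>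
                  (∑ ℓ : Fin k, (m ℓ : ℕ)) = j ∧
                    ∑ ℓ : Fin k, ((ℓ : ℕ) + 1) * (m ℓ : ℕ) ≤ k),
                (Nat.multinomial Finset.univ (fun ℓ : Fin k => (m ℓ : ℕ)) : ℝ)
                  * ∏ ℓ : Fin k, (P {ω | X 0 ω = (ℓ : ℕ) + 1}).toReal ^ (m ℓ : ℕ) := by
  classical
  set p : ℕ → ℝ := fun v => (P (X 0 ⁻¹' {v})).toReal with hp
  set ge : (Fin n → ℕ) → ℕ → ℕ := fun g i => if h : i < n then g ⟨i, h⟩ else 0 with hge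
  set G : Finset (Fin n → ℕ) := (Fintype.piFinset fun _ : Fin n => Finset.range (k + 1)).filter
      (fun g => ∑ i, g i ≤ k) with hG
  set A : (Fin n → ℕ) → Set Ω := fun g => ⋂ i ∈ Finset.range n, X i ⁻¹' {ge g i} with hA
  have hEq : {ω | ∑ i ∈ Finset.range n, X i ω ≤ k} = ⋃ g ∈ G, A g := by
    ext ω
    simp only [Set.mem_setOf_eq, Set.mem_iUnion, hA, Set.mem_iInter, Set.mem_preimage,
      Set.mem_singleton_iff]
    constructor
    · intro h
      refine ⟨fun i => X i ω, ?_, ?_⟩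
      · rw [hG, Finset.mem_filter]
        constructor
        · rw [Fintype.mem_piFinset]
          intro i
          rw [Finset.mem_range, Nat.lt_succ_iff]
          exact le_trans (Finset.single_le_sum (f := fun i => X i ω)
            (fun _ _ => Nat.zero_le _) (Finset.mem_range.mpr i.isLt)) h
        · rw [← Finset.sum_range (fun i => X i ω)]
          exact h
      · intro i hi
        rw [hge]
        simp [Finset.mem_range.mp hi]
    · rintro ⟨g, hgG, hg⟩
      rw [hG, Finset.mem_filter] at hgG
      calc ∑ i ∈ Finset.range n, X i ω = ∑ i ∈ Finset.range n, ge g i :=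
            Finset.sum_congr rfl hg
        _ = ∑ i : Fin n, g i := by
            rw [Finset.sum_range (fun i => ge g i)]
            exact Finset.sum_congr rfl fun i _ => by simp [hge]
        _ ≤ k := hgG.2
  have hAmeas : ∀ g, MeasurableSet (A g) := by
    intro g
    exact MeasurableSet.biInter (Finset.range n).countable_toSet
      (fun i _ => (hX i) (measurableSet_singleton _))
  have hdisj : (G : Set (Fin n → ℕ)).PairwiseDisjoint A := by
    intro g hg g' hg' hne
    rw [Function.onFun, Set.disjoint_left]
    intro ω hω hω'
    apply hne
    funext i
    have h1 : X (i : ℕ) ω = ge g i := by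
      simp only [hA, Set.mem_iInter, Set.mem_preimage, Set.mem_singleton_iff] at hω
      exact hω i (Finset.mem_range.mpr i.isLt)
    have h2 : X (i : ℕ) ω = ge g' i := by
      simp only [hA, Set.mem_iInter, Set.mem_preimage, Set.mem_singleton_iff] at hω'
      exact hω' i (Finset.mem_range.mpr i.isLt)
    have hgi : ge g (i : ℕ) = g i := by simp [hge]
    have hgi' : ge g' (i : ℕ) = g' i := by simp [hge]
    rw [← hgi, ← h1, h2, hgi']
  have hPA : ∀ g, P (A g) = ∏ i ∈ Finset.range n, P (X i ⁻¹' {ge g i}) := by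
    intro g
    exact hind.iIndep.meas_biInter (fun i _ => ⟨{ge g i}, measurableSet_singleton _, rfl⟩)
  have hPid : ∀ (i v : ℕ), P (X i ⁻¹' {v}) = P (X 0 ⁻¹' {v}) := fun i v =>
    (hid i 0).measure_mem_eq (measurableSet_singleton v)
  have hmain : (P {ω | ∑ i ∈ Finset.range n, X i ω ≤ k}).toReal
      = ∑ g ∈ G, ∏ i : Fin n, p (g i) := by
    rw [hEq, measure_biUnion_finset hdisj (fun g _ => hAmeas g),
      ENNReal.toReal_sum (fun g _ => by
        rw [hPA g]
        exact (ENNReal.prod_lt_top (fun i _ => measure_lt_top P _)).ne)]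
    refine Finset.sum_congr rfl fun g _ => ?_
    rw [hPA g, ENNReal.toReal_prod]
    have : ∀ i ∈ Finset.range n, (P (X i ⁻¹' {ge g i})).toReal = p (ge g i) := by
      intro i _
      rw [hp, hPid i]
    rw [Finset.prod_congr rfl this, Finset.prod_range (fun i => p (ge g i))]
    exact Finset.prod_congr rfl fun i _ => by simp [hge]
  rw [hmain, multinomial_sum_eq p k n (fun j hj => inner_conv p k j hj)]
  rfl
end

section
/- Let k, m ∈ ℕ with m ≥ k, let p > 0 be a real number, and let z₀, z₁, …, z_k be nonnegative real numbers, not all zero; set j* := max{ j ∈ {0,…,k} : z_j ≠ 0 }. For j ∈ ℕ let b_j ∈ ℝ[X] denote the binomial-coefficient polynomial b_j(T) := (1/j!) · ∏_{i=0}^{j−1} (T − i) (so b_j(n) = C(n,j) for n ∈ ℕ). Define the real polynomial H_m := ∑_{j₁=0}^{k} ∑_{j₂=0}^{k} p^{2m−j₁−j₂} · z_{j₁} · z_{j₂} · b_{j₁}(m + X) · b_{j₂}(m − X), where b_{j}(m ± X) means composing b_j with the linear polynomial m ± X. Then H_m has degree 2·j* and its leading coefficient equals (−1)^{j*} · (j*!)^{−2}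 · p^{2m−2j*} · z_{j*}². -/
open Finset Polynomial

/-- The binomial-coefficient polynomial `b_j(T) = (1/j!)·∏_{i<j}(T - i)`,
satisfying `b_j(n) = C(n,j)` for naturals `n`. -/
noncomputable def binomPoly (j : ℕ) : Polynomial ℝ :=
  Polynomial.C (1 / (j.factorial : ℝ)) *
    ∏ i ∈ Finset.range j, (Polynomial.X - Polynomial.C (i : ℝ))

lemma binomPoly_natDegree (j : ℕ) : (binomPoly j).natDegree = j := by
  unfold binomPoly
  rw [natDegree_C_mul (by positivity : (1/(j.factorial:ℝ)) ≠ 0),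
    natDegree_prod_of_monic _ _ fun i _ => monic_X_sub_C _]
  simp only [natDegree_X_sub_C]; simp

lemma binomPoly_leadingCoeff (j : ℕ) : (binomPoly j).leadingCoeff = 1 / j.factorial := by
  unfold binomPoly
  rw [leadingCoeff_mul, leadingCoeff_C,
    (monic_prod_of_monic _ _ fun i _ => monic_X_sub_C (R := ℝ) _).leadingCoeff, mul_one]

lemma comp1_natDegree (j m : ℕ) :
    ((binomPoly j).comp (Polynomial.C (m : ℝ) + Polynomial.X)).natDegree = j := by
  rw [natDegree_comp, binomPoly_natDegree, add_comm (Polynomial.C (m:ℝ)), natDegree_X_add_C, mul_one]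

lemma comp2_natDegree (j m : ℕ) :
    ((binomPoly j).comp (Polynomial.C (m : ℝ) - Polynomial.X)).natDegree = j := by
  have : Polynomial.C (m:ℝ) - Polynomial.X = -(Polynomial.X - Polynomial.C (m:ℝ)) := by ring
  rw [natDegree_comp, binomPoly_natDegree, this, natDegree_neg, natDegree_X_sub_C, mul_one]

lemma comp1_leadingCoeff (j m : ℕ) :
    ((binomPoly j).comp (Polynomial.C (m : ℝ) + Polynomial.X)).leadingCoeff = 1 / j.factorial := by
  rw [add_comm (Polynomial.C (m:ℝ)), leadingCoeff_comp (by rw [natDegree_X_add_C]; norm_num),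
    (monic_X_add_C _).leadingCoeff, one_pow, mul_one, binomPoly_leadingCoeff]

lemma comp2_leadingCoeff (j m : ℕ) :
    ((binomPoly j).comp (Polynomial.C (m : ℝ) - Polynomial.X)).leadingCoeff
      = (1 / j.factorial) * (-1)^j := by
  have h : Polynomial.C (m:ℝ) - Polynomial.X = -(Polynomial.X - Polynomial.C (m:ℝ)) := by ring
  have hd : (-(Polynomial.X - Polynomial.C (m:ℝ))).natDegree ≠ 0 := by
    rw [natDegree_neg, natDegree_X_sub_C]; norm_num
  rw [h, leadingCoeff_comp hd, binomPoly_leadingCoeff, leadingCoeff_neg,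
    (monic_X_sub_C _).leadingCoeff, binomPoly_natDegree]

/-- The polynomial `H_m = ∑_{j₁,j₂=0}^{k} p^{2m-j₁-j₂} z_{j₁} z_{j₂} b_{j₁}(m+X) b_{j₂}(m-X)`. -/
noncomputable def hPoly (k : ℕ) (p : ℝ) (z : ℕ → ℝ) (m : ℕ) : Polynomial ℝ :=
  ∑ j₁ ∈ Finset.range (k + 1), ∑ j₂ ∈ Finset.range (k + 1),
    Polynomial.C (p ^ (2 * m - j₁ - j₂) * z j₁ * z j₂) *
      ((binomPoly j₁).comp (Polynomial.C (m : ℝ) + Polynomial.X)) *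
      ((binomPoly j₂).comp (Polynomial.C (m : ℝ) - Polynomial.X))

/-- Equations (5.2)–(5.3) of the paper: `H_m` has degree `2·j*` and leading coefficient
`(-1)^{j*} (j*!)⁻² p^{2m-2j*} z_{j*}²`, where `j* = max{j ≤ k : z_j ≠ 0}`. -/
theorem hPoly_natDegree_leadingCoeff (k m : ℕ) (hmk : k ≤ m) (p : ℝ) (hp : 0 < p)
    (z : ℕ → ℝ) (hz : ∀ j ≤ k, 0 ≤ z j)
    (jstar : ℕ) (hjk : jstar ≤ k) (hzj : z jstar ≠ 0)
    (hmax : ∀ j, jstar < j → j ≤ k → z j = 0) :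
    (hPoly k p z m).natDegree = 2 * jstar ∧
    (hPoly k p z m).leadingCoeff
      = (-1) ^ jstar * ((jstar.factorial : ℝ))⁻¹ ^ 2 * p ^ (2 * m - 2 * jstar)
          * z jstar ^ 2 := by
  have hfac : ∀ j : ℕ, (j.factorial : ℝ) ≠ 0 := fun j => by
    exact_mod_cast j.factorial_ne_zero
  have hle : ∀ j, j ≤ k → z j ≠ 0 → j ≤ jstar := fun j hj hzne => by
    by_contra h; exact hzne (hmax j (lt_of_not_ge h) hj)
  set t : ℕ → ℕ → Polynomial ℝ := fun j₁ j₂ =>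
    Polynomial.C (p ^ (2 * m - j₁ - j₂) * z j₁ * z j₂) *
      ((binomPoly j₁).comp (Polynomial.C (m : ℝ) + Polynomial.X)) *
      ((binomPoly j₂).comp (Polynomial.C (m : ℝ) - Polynomial.X)) with ht
  have hdegle : ∀ j₁ j₂, (t j₁ j₂).natDegree ≤ j₁ + j₂ := by
    intro j₁ j₂
    calc (t j₁ j₂).natDegree
        ≤ (Polynomial.C (p ^ (2 * m - j₁ - j₂) * z j₁ * z j₂) *
            ((binomPoly j₁).comp (Polynomial.C (m : ℝ) + Polynomial.X))).natDegree
          + ((binomPoly j₂).comp (Polynomial.C (m : ℝ) - Polynomial.X)).natDegree :=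
          natDegree_mul_le
      _ ≤ (Polynomial.C (p ^ (2 * m - j₁ - j₂) * z j₁ * z j₂)).natDegree
          + ((binomPoly j₁).comp (Polynomial.C (m : ℝ) + Polynomial.X)).natDegree
          + ((binomPoly j₂).comp (Polynomial.C (m : ℝ) - Polynomial.X)).natDegree := by
          gcongr; exact natDegree_mul_le
      _ = j₁ + j₂ := by rw [natDegree_C, comp1_natDegree, comp2_natDegree, zero_add]
  have hdegle' : ∀ j₁ ∈ Finset.range (k+1), ∀ j₂ ∈ Finset.range (k+1),
      (t j₁ j₂).natDegree ≤ 2 * jstar := by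
    intro j₁ hj₁ j₂ hj₂
    by_cases hz1 : z j₁ = 0
    · simp [ht, hz1]
    by_cases hz2 : z j₂ = 0
    · simp [ht, hz2]
    have h1 := hle j₁ (by simpa using Nat.lt_succ_iff.mp (Finset.mem_range.mp hj₁)) hz1
    have h2 := hle j₂ (by simpa using Nat.lt_succ_iff.mp (Finset.mem_range.mp hj₂)) hz2
    exact le_trans (hdegle j₁ j₂) (by omega)
  have hdeg : (hPoly k p z m).natDegree ≤ 2 * jstar := by
    unfold hPoly
    refine natDegree_sum_le_of_forall_le _ _ fun j₁ hj₁ => ?_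
    exact natDegree_sum_le_of_forall_le _ _ fun j₂ hj₂ => hdegle' j₁ hj₁ j₂ hj₂
  -- diagonal term
  have hcne : p ^ (2 * m - jstar - jstar) * z jstar * z jstar ≠ 0 := by
    apply mul_ne_zero (mul_ne_zero (pow_ne_zero _ (ne_of_gt hp)) hzj) hzj
  have hc1ne : ((binomPoly jstar).comp (Polynomial.C (m : ℝ) + Polynomial.X)) ≠ 0 := by
    intro h
    have := comp1_leadingCoeff jstar m
    rw [h, leadingCoeff_zero] at this
    exact (hfac jstar) (by field_simp at this; simp at this)
  have hc2ne : ((binomPoly jstar).comp (Polynomial.C (m : ℝ) - Polynomial.X)) ≠ 0 := by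
    intro h
    have := comp2_leadingCoeff jstar m
    rw [h, leadingCoeff_zero] at this
    have : (1 / (jstar.factorial:ℝ)) = 0 := by
      rcases mul_eq_zero.mp this.symm with h' | h'
      · exact h'.symm ▸ rfl
      · exact absurd h' (pow_ne_zero _ (by norm_num))
    exact (hfac jstar) (by field_simp at this; simp at this)
  have hdiagdeg : (t jstar jstar).natDegree = 2 * jstar := by
    rw [ht]
    simp only
    rw [natDegree_mul (mul_ne_zero (by simpa using hcne) hc1ne) hc2ne,
      natDegree_mul (by simpa using hcne) hc1ne,
      natDegree_C, comp1_natDegree, comp2_natDegree]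
    omega
  have hdiagL : (t jstar jstar).leadingCoeff
      = (-1) ^ jstar * ((jstar.factorial : ℝ))⁻¹ ^ 2 * p ^ (2 * m - 2 * jstar)
          * z jstar ^ 2 := by
    rw [ht]
    simp only
    rw [leadingCoeff_mul, leadingCoeff_mul, leadingCoeff_C, comp1_leadingCoeff,
      comp2_leadingCoeff]
    have : 2 * m - jstar - jstar = 2 * m - 2 * jstar := by omega
    rw [this]
    field_simp
  have hcoeff : (hPoly k p z m).coeff (2 * jstar)
      = (-1) ^ jstar * ((jstar.factorial : ℝ))⁻¹ ^ 2 * p ^ (2 * m - 2 * jstar)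
          * z jstar ^ 2 := by
    unfold hPoly
    rw [finset_sum_coeff]
    rw [Finset.sum_eq_single jstar]
    · rw [finset_sum_coeff, Finset.sum_eq_single jstar]
      · rw [show (t jstar jstar).coeff (2*jstar) = (t jstar jstar).leadingCoeff from
          by rw [leadingCoeff, hdiagdeg], hdiagL]
      · intro j₂ hj₂ hne
        by_cases hz2 : z j₂ = 0
        · simp [hz2]
        have h2 := hle j₂ (Nat.lt_succ_iff.mp (Finset.mem_range.mp hj₂)) hz2
        apply coeff_eq_zero_of_natDegree_lt
        exact lt_of_le_of_lt (hdegle jstar j₂) (by omega)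
      · intro h; exact absurd (Finset.mem_range.mpr (Nat.lt_succ_of_le hjk)) h
    · intro j₁ hj₁ hne
      rw [finset_sum_coeff]
      apply Finset.sum_eq_zero
      intro j₂ hj₂
      by_cases hz1 : z j₁ = 0
      · simp [hz1]
      by_cases hz2 : z j₂ = 0
      · simp [hz2]
      have h1 := hle j₁ (Nat.lt_succ_iff.mp (Finset.mem_range.mp hj₁)) hz1
      have h2 := hle j₂ (Nat.lt_succ_iff.mp (Finset.mem_range.mp hj₂)) hz2
      apply coeff_eq_zero_of_natDegree_lt
      have : j₁ < jstar := lt_of_le_of_ne h1 hne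
      exact lt_of_le_of_lt (hdegle j₁ j₂) (by omega)
    · intro h; exact absurd (Finset.mem_range.mpr (Nat.lt_succ_of_le hjk)) h
  have hcne0 : (hPoly k p z m).coeff (2 * jstar) ≠ 0 := by
    rw [hcoeff]
    apply mul_ne_zero (mul_ne_zero (mul_ne_zero (pow_ne_zero _ (by norm_num))
      (pow_ne_zero _ (inv_ne_zero (hfac jstar)))) (pow_ne_zero _ (ne_of_gt hp)))
      (pow_ne_zero _ hzj)
  have hdeg' : (hPoly k p z m).natDegree = 2 * jstar :=
    le_antisymm hdeg (le_natDegree_of_ne_zero hcne0)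
  exact ⟨hdeg', by rw [leadingCoeff, hdeg', hcoeff]⟩
end

section
/- Let k ∈ ℕ, let p be a real number with 0 < p ≤ 1, and let z₀, z₁, …, z_k be nonnegative real numbers with z₀ > 0. Define g : ℕ → ℝ by g(n) := ∑_{j=0}^{k} C(n,j) · p^{n−j} · z_j (with C(n,j) = 0 for j > n), and for naturals ℓ ≤ m define D_ℓ(m) := ∑_{i=0}^{ℓ} (−1)^{ℓ−i} · C(ℓ,i) · g(m+i) · g(m−i). Let j* := max{ j ∈ {0,…,k} : z_j ≠ 0 }. Then: (i) D_ℓ(2k) = 0 for every ℓ with 2j* < ℓ ≤ 2k; (ii) D_{2j*}(2k) ≠ 0; and (iii) D_{2j*}(2k+1) / D_{2j*}(2k) = p². -/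
open Finset

/-- `g(n) = ∑_{j=0}^{k} C(n,j) p^{n-j} z_j`. -/
noncomputable def gFun (k : ℕ) (p : ℝ) (z : ℕ → ℝ) (n : ℕ) : ℝ :=
  ∑ j ∈ Finset.range (k + 1), (n.choose j : ℝ) * p ^ (n - j) * z j

/-- `D_ℓ(m) = ∑_{i=0}^{ℓ} (-1)^{ℓ-i} C(ℓ,i) g(m+i) g(m-i)`, the `ℓ`-th finite difference
at 0 of `x ↦ g(m+x)·g(m-x)`. -/
noncomputable def dFun (k : ℕ) (p : ℝ) (z : ℕ → ℝ) (ℓ m : ℕ) : ℝ :=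
  ∑ i ∈ Finset.range (ℓ + 1),
    (-1 : ℝ) ^ (ℓ - i) * (ℓ.choose i : ℝ) * gFun k p z (m + i) * gFun k p z (m - i)

namespace PQEAux

open Polynomial

/-! ### The binomial-coefficient polynomial -/

/-- Binomial coefficient polynomial: eval at `n : ℕ` is `n.choose j`. -/
noncomputable def cbPoly (j : ℕ) : Polynomial ℝ :=
  Polynomial.C (1 / (j.factorial : ℝ)) * descPochhammer ℝ j

lemma cbPoly_eval (j n : ℕ) : (cbPoly j).eval (n : ℝ) = (n.choose j : ℝ) := by
  have hj : (j.factorial : ℝ) ≠ 0 := by exact_mod_cast j.factorial_ne_zero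
  rw [cbPoly, eval_mul, eval_C, descPochhammer_eval_eq_descFactorial,
    Nat.descFactorial_eq_factorial_mul_choose]
  push_cast
  field_simp

lemma cbPoly_natDegree (j : ℕ) : (cbPoly j).natDegree = j := by
  have hj : (1 / (j.factorial : ℝ)) ≠ 0 := by
    simp [Nat.factorial_ne_zero]
  rw [cbPoly, natDegree_C_mul hj, descPochhammer_natDegree]

lemma cbPoly_leadingCoeff (j : ℕ) : (cbPoly j).leadingCoeff = 1 / (j.factorial : ℝ) := by
  rw [cbPoly, leadingCoeff_mul, leadingCoeff_C, (monic_descPochhammer ℝ j).leadingCoeff, mul_one]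

/-! ### Forward differences of polynomial evaluations -/

/-- The forward difference of a polynomial evaluation. -/
lemma fwdDiff_eval (Q : Polynomial ℝ) :
    fwdDiff 1 (fun n : ℕ => Q.eval (n : ℝ)) =
      fun n : ℕ => ((Polynomial.taylor 1 Q) - Q).eval (n : ℝ) := by
  funext n
  rw [fwdDiff, Polynomial.eval_sub, Polynomial.taylor_apply, Polynomial.eval_comp]
  push_cast
  simp

lemma hasseDeriv_eval_one (Q : Polynomial ℝ) (i : ℕ) (h : Q.natDegree ≤ i + 1) :
    (Polynomial.hasseDeriv i Q).eval 1 =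
      Q.coeff i + ((i+1 : ℕ) : ℝ) * Q.coeff (i + 1) := by
  have hd : (Polynomial.hasseDeriv i Q).natDegree < 2 :=
    lt_of_le_of_lt (Polynomial.natDegree_hasseDeriv_le Q i) (by omega)
  rw [Polynomial.eval_eq_sum_range' hd]
  simp [Finset.sum_range_succ, Polynomial.hasseDeriv_coeff, Nat.add_comm 1 i,
    Nat.choose_succ_self_right]

lemma diffPoly_coeff (Q : Polynomial ℝ) (ℓ : ℕ) (h : Q.natDegree ≤ ℓ + 1) :
    ((Polynomial.taylor 1 Q) - Q).coeff ℓ = ((ℓ+1 : ℕ) : ℝ) * Q.coeff (ℓ + 1) := by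
  rw [Polynomial.coeff_sub, Polynomial.taylor_coeff, hasseDeriv_eval_one Q ℓ h]
  ring

lemma diffPoly_natDegree (Q : Polynomial ℝ) (ℓ : ℕ) (h : Q.natDegree ≤ ℓ + 1) :
    ((Polynomial.taylor 1 Q) - Q).natDegree ≤ ℓ := by
  rw [Polynomial.natDegree_le_iff_coeff_eq_zero]
  intro N hN
  have hN1 : Q.natDegree ≤ N + 1 := by omega
  have hN2 : Q.natDegree ≤ N := by omega
  rw [Polynomial.coeff_sub, Polynomial.taylor_coeff, hasseDeriv_eval_one Q N hN1,
    Polynomial.coeff_eq_zero_of_natDegree_lt (lt_of_le_of_lt hN2 (Nat.lt_succ_self N))]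
  ring

/-- ℓ-th forward difference at 0 of a polynomial of degree ≤ ℓ. -/
lemma fwdDiff_iter_eval_zero : ∀ (ℓ : ℕ) (Q : Polynomial ℝ), Q.natDegree ≤ ℓ →
    (fwdDiff 1)^[ℓ] (fun n : ℕ => Q.eval (n : ℝ)) 0 = (ℓ.factorial : ℝ) * Q.coeff ℓ := by
  intro ℓ
  induction ℓ with
  | zero =>
    intro Q _
    simp [Polynomial.coeff_zero_eq_eval_zero]
  | succ ℓ ih =>
    intro Q hQ
    rw [Function.iterate_succ_apply, fwdDiff_eval,
      ih _ (diffPoly_natDegree Q ℓ hQ), diffPoly_coeff Q ℓ hQ,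
      Nat.factorial_succ]
    push_cast
    ring

/-- the finite difference at 0 only depends on values on `[0, ℓ]`. -/
lemma fwdDiff_iter_congr (f g : ℕ → ℝ) (ℓ : ℕ) (h : ∀ x ≤ ℓ, f x = g x) :
    (fwdDiff 1)^[ℓ] f 0 = (fwdDiff 1)^[ℓ] g 0 := by
  rw [fwdDiff_iter_eq_sum_shift, fwdDiff_iter_eq_sum_shift]
  refine Finset.sum_congr rfl fun i hi => ?_
  rw [h (0 + i • 1) (by simpa using Nat.lt_succ_iff.mp (Finset.mem_range.mp hi))]

lemma dFun_eq_fwdDiff (k : ℕ) (p : ℝ) (z : ℕ → ℝ) (ℓ m : ℕ) :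
    dFun k p z ℓ m = (fwdDiff 1)^[ℓ] (fun x : ℕ => gFun k p z (m + x) * gFun k p z (m - x)) 0 := by
  rw [fwdDiff_iter_eq_sum_shift, dFun]
  refine Finset.sum_congr rfl fun i hi => ?_
  simp only [smul_eq_mul, zero_add, mul_one, zsmul_eq_mul]
  push_cast
  ring

/-! ### The polynomials representing `x ↦ g(m+x)` and `x ↦ g(m-x)` (up to `p`-powers) -/

noncomputable def aPoly (k : ℕ) (p : ℝ) (z : ℕ → ℝ) (m : ℕ) : Polynomial ℝ :=
  ∑ j ∈ Finset.range (k + 1),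
    Polynomial.C (z j / p ^ j) * (cbPoly j).comp (Polynomial.C (m : ℝ) + Polynomial.X)

noncomputable def bPoly (k : ℕ) (p : ℝ) (z : ℕ → ℝ) (m : ℕ) : Polynomial ℝ :=
  ∑ j ∈ Finset.range (k + 1),
    Polynomial.C (z j / p ^ j) * (cbPoly j).comp (Polynomial.C (m : ℝ) - Polynomial.X)

lemma gFun_eq (k : ℕ) (p : ℝ) (hp : p ≠ 0) (z : ℕ → ℝ) (n : ℕ) :
    gFun k p z n = p ^ n * ∑ j ∈ Finset.range (k + 1), (n.choose j : ℝ) * (z j / p ^ j) := by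
  rw [gFun, Finset.mul_sum]
  refine Finset.sum_congr rfl fun j _ => ?_
  rcases le_or_gt j n with h | h
  · have : p ^ (n - j) * p ^ j = p ^ n := by
      rw [← pow_add, Nat.sub_add_cancel h]
    field_simp
    calc (n.choose j : ℝ) * p ^ (n - j) * z j * p ^ j
        = (n.choose j : ℝ) * z j * (p ^ (n - j) * p ^ j) := by ring
      _ = p ^ n * ((n.choose j : ℝ) * z j) := by rw [this]; ring
      _ = (n.choose j : ℝ) * z j * p ^ n := by ring
  · rw [Nat.choose_eq_zero_of_lt h]
    simp

lemma aPoly_eval (k : ℕ) (p : ℝ) (hp : p ≠ 0) (z : ℕ → ℝ) (m x : ℕ) :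
    gFun k p z (m + x) = p ^ (m + x) * (aPoly k p z m).eval (x : ℝ) := by
  rw [gFun_eq k p hp z (m + x), aPoly, Polynomial.eval_finset_sum]
  congr 1
  refine Finset.sum_congr rfl fun j _ => ?_
  rw [Polynomial.eval_mul, Polynomial.eval_C, Polynomial.eval_comp]
  simp only [Polynomial.eval_add, Polynomial.eval_C, Polynomial.eval_X]
  rw [show ((m : ℝ) + x) = ((m + x : ℕ) : ℝ) by push_cast; ring, cbPoly_eval]
  ring

lemma bPoly_eval (k : ℕ) (p : ℝ) (hp : p ≠ 0) (z : ℕ → ℝ) (m x : ℕ) (hx : x ≤ m) :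
    gFun k p z (m - x) = p ^ (m - x) * (bPoly k p z m).eval (x : ℝ) := by
  rw [gFun_eq k p hp z (m - x), bPoly, Polynomial.eval_finset_sum]
  congr 1
  refine Finset.sum_congr rfl fun j _ => ?_
  rw [Polynomial.eval_mul, Polynomial.eval_C, Polynomial.eval_comp]
  simp only [Polynomial.eval_sub, Polynomial.eval_C, Polynomial.eval_X]
  rw [show ((m : ℝ) - x) = ((m - x : ℕ) : ℝ) by push_cast [hx]; ring, cbPoly_eval]
  ring

lemma prod_eval (k : ℕ) (p : ℝ) (hp : p ≠ 0) (z : ℕ → ℝ) (m x : ℕ) (hx : x ≤ m) :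
    gFun k p z (m + x) * gFun k p z (m - x) =
      p ^ (2 * m) * ((aPoly k p z m) * (bPoly k p z m)).eval (x : ℝ) := by
  rw [aPoly_eval k p hp z m x, bPoly_eval k p hp z m x hx, Polynomial.eval_mul,
    show p ^ (m + x) * eval (x:ℝ) (aPoly k p z m) * (p ^ (m - x) * eval (x:ℝ) (bPoly k p z m))
      = p ^ (m + x + (m - x)) * (eval (x:ℝ) (aPoly k p z m) * eval (x:ℝ) (bPoly k p z m)) by
      rw [pow_add]; ring,
    show m + x + (m - x) = 2 * m by omega]

/-! ### Degrees and top coefficients -/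

lemma compA_natDegree (j m : ℕ) :
    ((cbPoly j).comp (Polynomial.C (m : ℝ) + Polynomial.X)).natDegree = j := by
  rw [Polynomial.natDegree_comp, cbPoly_natDegree, add_comm (Polynomial.C (m:ℝ)) Polynomial.X,
    Polynomial.natDegree_X_add_C, mul_one]

lemma compB_natDegree (j m : ℕ) :
    ((cbPoly j).comp (Polynomial.C (m : ℝ) - Polynomial.X)).natDegree = j := by
  have : (Polynomial.C (m : ℝ) - Polynomial.X) = -(Polynomial.X - Polynomial.C (m:ℝ)) := by ring
  rw [Polynomial.natDegree_comp, cbPoly_natDegree, this, Polynomial.natDegree_neg,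
    Polynomial.natDegree_X_sub_C, mul_one]

lemma compA_leadingCoeff (j m : ℕ) :
    ((cbPoly j).comp (Polynomial.C (m : ℝ) + Polynomial.X)).leadingCoeff
      = 1 / (j.factorial : ℝ) := by
  rw [add_comm (Polynomial.C (m:ℝ)) Polynomial.X]
  rw [Polynomial.leadingCoeff_comp (by rw [Polynomial.natDegree_X_add_C]; omega),
    cbPoly_leadingCoeff, Polynomial.leadingCoeff_X_add_C, one_pow, mul_one]

lemma compB_leadingCoeff (j m : ℕ) :
    ((cbPoly j).comp (Polynomial.C (m : ℝ) - Polynomial.X)).leadingCoeff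
      = (-1 : ℝ) ^ j * (1 / (j.factorial : ℝ)) := by
  have h : (Polynomial.C (m : ℝ) - Polynomial.X) = -(Polynomial.X - Polynomial.C (m:ℝ)) := by ring
  rw [h, Polynomial.leadingCoeff_comp
      (by rw [Polynomial.natDegree_neg, Polynomial.natDegree_X_sub_C]; omega),
    cbPoly_leadingCoeff, Polynomial.leadingCoeff_neg, Polynomial.leadingCoeff_X_sub_C,
    cbPoly_natDegree]
  ring

lemma coeff_of_natDegree_eq (P : Polynomial ℝ) (d : ℕ) (h : P.natDegree = d) :
    P.coeff d = P.leadingCoeff := by rw [← h, Polynomial.coeff_natDegree]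

variable (k : ℕ) (p : ℝ) (z : ℕ → ℝ) (jstar : ℕ)

lemma aPoly_natDegree_le (hmax : ∀ j, jstar < j → j ≤ k → z j = 0) (m : ℕ) :
    (aPoly k p z m).natDegree ≤ jstar := by
  rw [Polynomial.natDegree_le_iff_coeff_eq_zero]
  intro N hN
  rw [aPoly, Polynomial.finset_sum_coeff]
  refine Finset.sum_eq_zero fun j hj => ?_
  rcases le_or_gt j jstar with h | h
  · exact Polynomial.coeff_eq_zero_of_natDegree_lt
      (lt_of_le_of_lt (le_trans (Polynomial.natDegree_C_mul_le _ _)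
        (le_of_eq (compA_natDegree j m))) (by omega))
  · rw [hmax j h (by simpa [Nat.lt_succ_iff] using hj)]
    simp

lemma bPoly_natDegree_le (hmax : ∀ j, jstar < j → j ≤ k → z j = 0) (m : ℕ) :
    (bPoly k p z m).natDegree ≤ jstar := by
  rw [Polynomial.natDegree_le_iff_coeff_eq_zero]
  intro N hN
  rw [bPoly, Polynomial.finset_sum_coeff]
  refine Finset.sum_eq_zero fun j hj => ?_
  rcases le_or_gt j jstar with h | h
  · exact Polynomial.coeff_eq_zero_of_natDegree_lt
      (lt_of_le_of_lt (le_trans (Polynomial.natDegree_C_mul_le _ _)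
        (le_of_eq (compB_natDegree j m))) (by omega))
  · rw [hmax j h (by simpa [Nat.lt_succ_iff] using hj)]
    simp

lemma aPoly_coeff (hjk : jstar ≤ k) (hmax : ∀ j, jstar < j → j ≤ k → z j = 0) (m : ℕ) :
    (aPoly k p z m).coeff jstar = z jstar / p ^ jstar * (1 / (jstar.factorial : ℝ)) := by
  rw [aPoly, Polynomial.finset_sum_coeff]
  rw [Finset.sum_eq_single jstar]
  · have hA : ((cbPoly jstar).comp (Polynomial.C (m:ℝ) + Polynomial.X)).coeff jstar
        = 1 / (jstar.factorial : ℝ) := by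
      rw [coeff_of_natDegree_eq _ _ (compA_natDegree jstar m), compA_leadingCoeff]
    rw [Polynomial.coeff_C_mul, hA]
  · intro j hj hne
    rcases lt_or_gt_of_ne hne with h | h
    · rw [Polynomial.coeff_C_mul, Polynomial.coeff_eq_zero_of_natDegree_lt
        (by rw [compA_natDegree]; omega), mul_zero]
    · rw [hmax j h (by simpa [Nat.lt_succ_iff] using hj)]
      simp
  · intro h
    exact absurd (Finset.mem_range.mpr (by omega)) h

lemma bPoly_coeff (hjk : jstar ≤ k) (hmax : ∀ j, jstar < j → j ≤ k → z j = 0) (m : ℕ) :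
    (bPoly k p z m).coeff jstar
      = z jstar / p ^ jstar * ((-1 : ℝ) ^ jstar * (1 / (jstar.factorial : ℝ))) := by
  rw [bPoly, Polynomial.finset_sum_coeff]
  rw [Finset.sum_eq_single jstar]
  · have hB : ((cbPoly jstar).comp (Polynomial.C (m:ℝ) - Polynomial.X)).coeff jstar
        = (-1 : ℝ) ^ jstar * (1 / (jstar.factorial : ℝ)) := by
      rw [coeff_of_natDegree_eq _ _ (compB_natDegree jstar m), compB_leadingCoeff]
    rw [Polynomial.coeff_C_mul, hB]
  · intro j hj hne
    rcases lt_or_gt_of_ne hne with h | h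
    · rw [Polynomial.coeff_C_mul, Polynomial.coeff_eq_zero_of_natDegree_lt
        (by rw [compB_natDegree]; omega), mul_zero]
    · rw [hmax j h (by simpa [Nat.lt_succ_iff] using hj)]
      simp
  · intro h
    exact absurd (Finset.mem_range.mpr (by omega)) h

end PQEAux

open PQEAux Polynomial in
/-- Lemma 5.10 (mathematical core of Algorithm 2): with `j* = max{j ≤ k : z_j ≠ 0}`,
(i) `D_ℓ(2k) = 0` for `2j* < ℓ ≤ 2k`; (ii) `D_{2j*}(2k) ≠ 0`;
(iii) `D_{2j*}(2k+1) / D_{2j*}(2k) = p²`. -/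
theorem finite_differences_recover_p (k : ℕ) (p : ℝ) (hp0 : 0 < p) (hp1 : p ≤ 1)
    (z : ℕ → ℝ) (hz : ∀ j ≤ k, 0 ≤ z j) (hz0 : 0 < z 0)
    (jstar : ℕ) (hjk : jstar ≤ k) (hzj : z jstar ≠ 0)
    (hmax : ∀ j, jstar < j → j ≤ k → z j = 0) :
    (∀ ℓ : ℕ, 2 * jstar < ℓ → ℓ ≤ 2 * k → dFun k p z ℓ (2 * k) = 0) ∧
    dFun k p z (2 * jstar) (2 * k) ≠ 0 ∧
    dFun k p z (2 * jstar) (2 * k + 1) / dFun k p z (2 * jstar) (2 * k) = p ^ 2 := by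
  have hp : p ≠ 0 := ne_of_gt hp0
  -- the key closed form for `dFun` when `2 jstar ≤ ℓ ≤ m`
  have hABdeg : ∀ m : ℕ, (aPoly k p z m * bPoly k p z m).natDegree ≤ 2 * jstar := fun m =>
    le_trans (Polynomial.natDegree_mul_le)
      (by
        have := aPoly_natDegree_le k p z jstar hmax m
        have := bPoly_natDegree_le k p z jstar hmax m
        omega)
  have key : ∀ m ℓ : ℕ, 2 * jstar ≤ ℓ → ℓ ≤ m →
      dFun k p z ℓ m =
        (ℓ.factorial : ℝ) * (p ^ (2 * m) * ((aPoly k p z m * bPoly k p z m).coeff ℓ)) := by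
    intro m ℓ h1 h2
    rw [dFun_eq_fwdDiff]
    rw [fwdDiff_iter_congr _
      (fun x : ℕ => (Polynomial.C (p ^ (2 * m)) * (aPoly k p z m * bPoly k p z m)).eval (x : ℝ))
      ℓ (by
        intro x hx
        rw [prod_eval k p hp z m x (le_trans hx h2)]
        simp [Polynomial.eval_mul])]
    rw [fwdDiff_iter_eval_zero ℓ _
      (le_trans (Polynomial.natDegree_C_mul_le _ _) (le_trans (hABdeg m) h1)),
      Polynomial.coeff_C_mul]
  -- values of the top coefficient
  set cA : ℝ := z jstar / p ^ jstar * (1 / (jstar.factorial : ℝ)) with hcA_def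
  set cB : ℝ := z jstar / p ^ jstar * ((-1 : ℝ) ^ jstar * (1 / (jstar.factorial : ℝ))) with hcB_def
  have hfac : ((jstar.factorial : ℝ)) ≠ 0 := by exact_mod_cast jstar.factorial_ne_zero
  have hcA : cA ≠ 0 := by
    apply mul_ne_zero (div_ne_zero hzj (pow_ne_zero _ hp))
    simpa using hfac
  have hcB : cB ≠ 0 := by
    apply mul_ne_zero (div_ne_zero hzj (pow_ne_zero _ hp))
    apply mul_ne_zero (pow_ne_zero _ (by norm_num))
    simpa using hfac
  have hAdeg : ∀ m : ℕ, (aPoly k p z m).natDegree = jstar := fun m =>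
    le_antisymm (aPoly_natDegree_le k p z jstar hmax m)
      (Polynomial.le_natDegree_of_ne_zero
        (by rw [aPoly_coeff k p z jstar hjk hmax m]; exact hcA))
  have hBdeg : ∀ m : ℕ, (bPoly k p z m).natDegree = jstar := fun m =>
    le_antisymm (bPoly_natDegree_le k p z jstar hmax m)
      (Polynomial.le_natDegree_of_ne_zero
        (by rw [bPoly_coeff k p z jstar hjk hmax m]; exact hcB))
  have hABcoeff : ∀ m : ℕ, (aPoly k p z m * bPoly k p z m).coeff (2 * jstar) = cA * cB := by
    intro m
    have h2 : 2 * jstar = (aPoly k p z m).natDegree + (bPoly k p z m).natDegree := by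
      rw [hAdeg m, hBdeg m]; ring
    rw [h2, Polynomial.coeff_mul_degree_add_degree,
      ← coeff_of_natDegree_eq _ _ (hAdeg m), ← coeff_of_natDegree_eq _ _ (hBdeg m),
      aPoly_coeff k p z jstar hjk hmax m, bPoly_coeff k p z jstar hjk hmax m]
  have hval : ∀ m : ℕ, 2 * jstar ≤ m →
      dFun k p z (2 * jstar) m =
        ((2 * jstar).factorial : ℝ) * (p ^ (2 * m) * (cA * cB)) := by
    intro m hm
    rw [key m (2 * jstar) le_rfl hm, hABcoeff m]
  have hfac2 : (((2 * jstar).factorial : ℝ)) ≠ 0 := by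
    exact_mod_cast (2 * jstar).factorial_ne_zero
  have hden : dFun k p z (2 * jstar) (2 * k) ≠ 0 := by
    rw [hval (2 * k) (by omega)]
    exact mul_ne_zero hfac2 (mul_ne_zero (pow_ne_zero _ hp) (mul_ne_zero hcA hcB))
  refine ⟨?_, hden, ?_⟩
  · intro ℓ hℓ1 hℓ2
    rw [key (2 * k) ℓ (by omega) hℓ2,
      Polynomial.coeff_eq_zero_of_natDegree_lt (lt_of_le_of_lt (hABdeg (2 * k)) hℓ1)]
    ring
  · rw [hval (2 * k) (by omega), hval (2 * k + 1) (by omega),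
      show 2 * (2 * k + 1) = 2 * (2 * k) + 2 by ring, pow_add]
    rw [div_eq_iff (by
      rw [← hval (2 * k) (by omega)]
      exact hden)]
    ring
end
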